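/- arXiv:1706.06059 — 2 statements merged into one kernel-verified Lean document; each statement's English description precedes it below -/
import Mathlib

section
/- (Elder Rule) Let k be a field and let T be a valid chiral merge tree with Elder barcode Elder(T) = {J₁, …, J_N}. Then the persistent vector space F_{S_T} freely generated by the persistent set S_T is naturally isomorphic, as a functor from the poset (ℝ, ≤) to k-vector spaces, to the direct sum ⊕_{i=1}^{N} k_{J_i} of the interval modules of the bars of Elder(T). -/
open scoped Classical

/-- Chiral merge trees: binary trees with a real label at every node,
and a left/right ordering of the children of each internal node. -/
inductive CMT : Type where
  | leaf (a : ℝ) : CMT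
  | node (a : ℝ) (l r : CMT) : CMT

namespace CMT

/-- The label of the root of a chiral merge tree. -/
def label : CMT → ℝ
  | leaf a => a
  | node a _ _ => a

/-- The minimum leaf label of a chiral merge tree. -/
def minLeaf : CMT → ℝ
  | leaf a => a
  | node _ l r => min (minLeaf l) (minLeaf r)

/-- The list of all labels of nodes of a chiral merge tree. -/
def labelList : CMT → List ℝ
  | leaf a => [a]
  | node a l r => a :: (labelList l ++ labelList r)

/-- In every subtree `node a l r`, the root labels of `l` and `r` are `< a`. -/
def LocalValid : CMT → Prop
  | leaf _ => True
  | node a l r => label l < a ∧ label r < a ∧ LocalValid l ∧ LocalValid r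

/-- A chiral merge tree is valid if its labels are pairwise distinct and in every
subtree `node a l r` the root labels of `l` and `r` are strictly less than `a`. -/
def Valid (T : CMT) : Prop := T.labelList.Nodup ∧ T.LocalValid

/-- The Elder barcode of a chiral merge tree: `Elder (leaf a) = {[a,∞)}`; for
`node a l r`, with `m` the larger of the two minimum leaf labels of `l` and `r`,
the unbounded bar `[m,∞)` of `Elder l ∪ Elder r` is replaced by `[m, a)`. -/
def Elder : CMT → Set (Set ℝ)
  | leaf a => {Set.Ici a}
  | node a l r =>
      insert (Set.Ico (max (minLeaf l) (minLeaf r)) a)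
        ((Elder l ∪ Elder r) \ {Set.Ici (max (minLeaf l) (minLeaf r))})

/-- The subtree of a chiral merge tree at the address `w` (a word in
`{L,R}`, encoded as `false`/`true`), if it exists. -/
def subtree? : CMT → List Bool → Option CMT
  | t, [] => some t
  | leaf _, _ :: _ => none
  | node _ l _, false :: w => subtree? l w
  | node _ _ r, true :: w => subtree? r w

/-- The label of the node of `T` at the address `w`, if such a node exists. -/
def nodeLabel? (T : CMT) (w : List Bool) : Option ℝ := (T.subtree? w).map label

/-- `T.MemS t w` means: `w` is the address of a node `v` of `T` with label `≤ t`
whose parent, if it exists, has label `> t`.  Thus `S_T(t) = {w // T.MemS t w}`. -/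
def MemS (T : CMT) (t : ℝ) (w : List Bool) : Prop :=
  (∃ a, T.nodeLabel? w = some a ∧ a ≤ t) ∧
  (∀ a, w ≠ [] → T.nodeLabel? w.dropLast = some a → t < a)

/-- The in-order (left subtree, root, right subtree) traversal of the node
addresses of a chiral merge tree. -/
def addrList : CMT → List (List Bool)
  | leaf _ => [[]]
  | node _ l r =>
      (addrList l).map (List.cons false) ++ [[]] ++ (addrList r).map (List.cons true)

/-- The node at address `u` strictly precedes the node at address `v`
in the in-order order on the nodes of `T`. -/
def InOrderLT (T : CMT) (u v : List Bool) : Prop :=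
  T.addrList.idxOf u < T.addrList.idxOf v

/-- The node at address `u` precedes or equals the node at address `v`
in the in-order order on the nodes of `T`. -/
def InOrderLE (T : CMT) (u v : List Bool) : Prop :=
  T.addrList.idxOf u ≤ T.addrList.idxOf v

/-- The number of nodes of a chiral merge tree. -/
def numNodes : CMT → ℕ
  | leaf _ => 1
  | node _ l r => 1 + numNodes l + numNodes r

/-- The number of leaves of a chiral merge tree. -/
def numLeaves : CMT → ℕ
  | leaf _ => 1
  | node _ l r => numLeaves l + numLeaves r

/-- The set of labels of leaves of a chiral merge tree. -/
def leafLabels : CMT → Set ℝ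
  | leaf a => {a}
  | node _ l r => leafLabels l ∪ leafLabels r

/-- The set of labels of internal (binary) nodes of a chiral merge tree. -/
def internalLabels : CMT → Set ℝ
  | leaf _ => ∅
  | node a l r => insert a (internalLabels l ∪ internalLabels r)

/-- The in-order traversal list of the nodes (as subtrees) of a chiral merge tree. -/
def trav : CMT → List CMT
  | leaf a => [leaf a]
  | node a l r => trav l ++ [node a l r] ++ trav r

/-- Whether a node is a leaf. -/
def isLeaf : CMT → Prop
  | leaf _ => True
  | node _ _ _ => False

end CMT
/-- The `j`-th bar of the barcode: `I₁ = [b₁, ∞)` (index `0`) and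
`I_j = [b_j, d_j)` for `j ≥ 2` (indices `≠ 0`). -/
def bar {N : ℕ} (b d : Fin N → ℝ) (j : Fin N) : Set ℝ :=
  if (j : ℕ) = 0 then Set.Ici (b j) else Set.Ico (b j) (d j)

/-- The barcode `B = {I₁, …, I_N}` as a set of intervals. -/
def barcodeOf {N : ℕ} (b d : Fin N → ℝ) : Set (Set ℝ) := Set.range (bar b d)

/-- `μ_B(I_j)`: the number of indices `k` with `I_j` strictly contained in `I_k`. -/
noncomputable def mu {N : ℕ} (b d : Fin N → ℝ) (j : Fin N) : ℕ :=
  Nat.card {k : Fin N // bar b d j ⊂ bar b d k}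
/-- The sublevel set `{x ∈ [0,1] : f x ≤ t}`. -/
def sublevel (f : ℝ → ℝ) (t : ℝ) : Set ℝ := {x | x ∈ Set.Icc (0:ℝ) 1 ∧ f x ≤ t}

/-- The set of connected components of `A ⊆ ℝ` (maximal connected subsets). -/
def Components (A : Set ℝ) : Set (Set ℝ) := {C | ∃ x ∈ A, C = connectedComponentIn A x}

/-- The left-to-right strict order on subsets of `ℝ`:
`C` is entirely to the left of `D`. -/
def CompLT (C D : Set ℝ) : Prop := ∀ x ∈ C, ∀ y ∈ D, x < y

/-- `f` and `g` are graph-equivalent: there is an increasing homeomorphism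
`φ : [0,1] → [0,1]` with `f = g ∘ φ` on `[0,1]`. -/
def GraphEquiv (f g : ℝ → ℝ) : Prop :=
  ∃ φ : ℝ → ℝ, ContinuousOn φ (Set.Icc 0 1) ∧ StrictMonoOn φ (Set.Icc 0 1) ∧
    Set.MapsTo φ (Set.Icc 0 1) (Set.Icc 0 1) ∧
    Set.SurjOn φ (Set.Icc 0 1) (Set.Icc 0 1) ∧
    ∀ x ∈ Set.Icc (0:ℝ) 1, f x = g (φ x)

/-- `f : [0,1] → ℝ` is Morse-like: continuous, and there are
`0 = p₀ < p₁ < ⋯ < p_m = 1` such that `f` is strictly monotone on each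
`[p_{i-1}, p_i]`, consecutive intervals have opposite directions of monotonicity,
and the values `f(p₀), …, f(p_m)` are pairwise distinct. -/
def MorseLike (f : ℝ → ℝ) : Prop :=
  ContinuousOn f (Set.Icc 0 1) ∧
  ∃ (m : ℕ) (p : ℕ → ℝ), p 0 = 0 ∧ p m = 1 ∧ (∀ i < m, p i < p (i + 1)) ∧
    (∀ i < m, StrictMonoOn f (Set.Icc (p i) (p (i + 1))) ∨
      StrictAntiOn f (Set.Icc (p i) (p (i + 1)))) ∧
    (∀ i, i + 1 < m →
      (StrictMonoOn f (Set.Icc (p i) (p (i + 1))) ↔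
        StrictAntiOn f (Set.Icc (p (i + 1)) (p (i + 2))))) ∧
    (∀ i j, i ≤ m → j ≤ m → i ≠ j → f (p i) ≠ f (p j))

/-- `f` realizes the barcode `B`: for all `r ≤ t`, the cardinality of the image of the
inclusion-induced map on connected components of sublevel sets (i.e. the number of
components of `{f ≤ t}` containing some component of `{f ≤ r}`) equals the number of
intervals of `B` containing both `r` and `t`. -/
def RealizesBarcode (f : ℝ → ℝ) (B : Set (Set ℝ)) : Prop :=
  ∀ r t : ℝ, r ≤ t →
    {D | D ∈ Components (sublevel f t) ∧ ∃ C ∈ Components (sublevel f r), C ⊆ D}.ncard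
      = {I | I ∈ B ∧ r ∈ I ∧ t ∈ I}.ncard

/-- `f` realizes the valid chiral merge tree `T`: for each `t` there is an
order-isomorphism `α t` from the components of `{f ≤ t}` (left-to-right order) to
`S_T(t)` (in-order order), commuting with the inclusion-induced maps on components
and the shift maps `σ_{tr}` (which send each node to its unique ancestor in `S_T(t)`;
being an ancestor is expressed by the address being a prefix). -/
def RealizesCMT (f : ℝ → ℝ) (T : CMT) : Prop :=
  ∃ α : (t : ℝ) → {C : Set ℝ // C ∈ Components (sublevel f t)} →
      {w : List Bool // T.MemS t w},
    (∀ t : ℝ, Function.Bijective (α t)) ∧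
    (∀ (t : ℝ) (C D : {C : Set ℝ // C ∈ Components (sublevel f t)}),
      CompLT C.1 D.1 ↔ T.InOrderLT (α t C).1 (α t D).1) ∧
    (∀ r t : ℝ, r ≤ t →
      ∀ (C : {C : Set ℝ // C ∈ Components (sublevel f r)})
        (D : {C : Set ℝ // C ∈ Components (sublevel f t)}),
        C.1 ⊆ D.1 → (α t D).1 <+: (α r C).1)

/-- `f` is piecewise linear on `[0,1]`. -/
def PiecewiseLinear (f : ℝ → ℝ) : Prop :=
  ∃ (m : ℕ) (p : ℕ → ℝ), p 0 = 0 ∧ p m = 1 ∧ (∀ i < m, p i < p (i + 1)) ∧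
    ∀ i < m, ∃ c e : ℝ, ∀ x ∈ Set.Icc (p i) (p (i + 1)), f x = c * x + e
/-- The interval module `k_I` at time `t` is the `k`-vector space
`PLift (t ∈ I) → k` of functions from (proofs of) `t ∈ I` to `k`, which is
one-dimensional if `t ∈ I` and the zero space otherwise.  `intervalShift k I r t` is
its shift map `k_I(r) → k_I(t)`: the identity when `r, t ∈ I` and zero otherwise. -/
noncomputable def intervalShift (k : Type) [Field k] (I : Set ℝ) (r t : ℝ) :
    (PLift (r ∈ I) → k) →ₗ[k] (PLift (t ∈ I) → k) where
  toFun x := fun _ => if hr : r ∈ I then x ⟨hr⟩ else 0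
  map_add' x y := by
    funext ht
    by_cases hr : r ∈ I <;> simp [hr]
  map_smul' c x := by
    funext ht
    by_cases hr : r ∈ I <;> simp [hr]

open scoped DirectSum

namespace CMT

/-! ### Basic combinatorial lemmas about chiral merge trees -/

theorem minLeaf_mem : ∀ T : CMT, T.minLeaf ∈ T.leafLabels
  | leaf a => Set.mem_singleton a
  | node _ l r => by
      rcases le_total l.minLeaf r.minLeaf with h | h
      · rw [minLeaf, min_eq_left h]
        exact Set.mem_union_left _ (minLeaf_mem l)
      · rw [minLeaf, min_eq_right h]
        exact Set.mem_union_right _ (minLeaf_mem r)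

theorem minLeaf_le : ∀ {T : CMT} {m : ℝ}, m ∈ T.leafLabels → T.minLeaf ≤ m
  | leaf a, m, hm => le_of_eq (Set.mem_singleton_iff.1 hm).symm
  | node a l r, m, hm => by
      rcases (hm : m ∈ l.leafLabels ∪ r.leafLabels) with h | h
      · exact le_trans (min_le_left _ _) (minLeaf_le h)
      · exact le_trans (min_le_right _ _) (minLeaf_le h)

theorem leaf_le_label : ∀ {T : CMT} {m : ℝ}, T.LocalValid → m ∈ T.leafLabels → m ≤ T.label
  | leaf a, m, _, hm => le_of_eq (Set.mem_singleton_iff.1 hm)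
  | node a l r, m, hv, hm => by
      obtain ⟨h1, h2, hvl, hvr⟩ := hv
      rcases (hm : m ∈ l.leafLabels ∪ r.leafLabels) with h | h
      · exact le_trans (leaf_le_label hvl h) (le_of_lt h1)
      · exact le_trans (leaf_le_label hvr h) (le_of_lt h2)

theorem minLeaf_le_label {T : CMT} (hv : T.LocalValid) : T.minLeaf ≤ T.label :=
  leaf_le_label hv T.minLeaf_mem

theorem leafLabels_mem_labelList : ∀ {T : CMT} {m : ℝ}, m ∈ T.leafLabels → m ∈ T.labelList
  | leaf _, m, hm => by simpa [labelList, leafLabels] using hm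
  | node a l r, m, hm => by
      simp only [labelList, List.mem_cons, List.mem_append]
      rcases (hm : m ∈ l.leafLabels ∪ r.leafLabels) with h | h
      · exact Or.inr (Or.inl (leafLabels_mem_labelList h))
      · exact Or.inr (Or.inr (leafLabels_mem_labelList h))

theorem Valid.left {a : ℝ} {l r : CMT} (h : (node a l r).Valid) : l.Valid := by
  obtain ⟨hn, hv⟩ := h
  simp only [labelList, List.nodup_cons, List.nodup_append] at hn
  exact ⟨hn.2.1, hv.2.2.1⟩

theorem Valid.right {a : ℝ} {l r : CMT} (h : (node a l r).Valid) : r.Valid := by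
  obtain ⟨hn, hv⟩ := h
  simp only [labelList, List.nodup_cons, List.nodup_append] at hn
  exact ⟨hn.2.2.1, hv.2.2.2⟩

theorem Valid.not_mem_right {a m : ℝ} {l r : CMT} (h : (node a l r).Valid)
    (hm : m ∈ l.leafLabels) : m ∉ r.leafLabels := by
  obtain ⟨hn, -⟩ := h
  simp only [labelList, List.nodup_cons, List.nodup_append] at hn
  intro hmr
  exact hn.2.2.2 _ (leafLabels_mem_labelList hm) _ (leafLabels_mem_labelList hmr) rfl

theorem Valid.minLeaf_ne {a : ℝ} {l r : CMT} (h : (node a l r).Valid) :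
    l.minLeaf ≠ r.minLeaf := fun he =>
  h.not_mem_right l.minLeaf_mem (he ▸ r.minLeaf_mem)

end CMT
namespace CMT

/-! ### The bar of a leaf -/

/-- The bar of the leaf with label `m` in `T`. -/
noncomputable def ebar : CMT → ℝ → Set ℝ
  | leaf a, _ => Set.Ici a
  | node a l r, m =>
      if m ∈ l.leafLabels then
        (if m = l.minLeaf ∧ r.minLeaf < l.minLeaf then Set.Ico m a else ebar l m)
      else
        (if m = r.minLeaf ∧ l.minLeaf < r.minLeaf then Set.Ico m a else ebar r m)

theorem ebar_node_left {a m : ℝ} {l r : CMT} (hm : m ∈ l.leafLabels) :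
    ebar (node a l r) m =
      if m = l.minLeaf ∧ r.minLeaf < l.minLeaf then Set.Ico m a else ebar l m := by
  rw [ebar, if_pos hm]

theorem ebar_node_right {a m : ℝ} {l r : CMT} (h : (node a l r).Valid)
    (hm : m ∈ r.leafLabels) :
    ebar (node a l r) m =
      if m = r.minLeaf ∧ l.minLeaf < r.minLeaf then Set.Ico m a else ebar r m := by
  rw [ebar, if_neg (fun hml => h.not_mem_right hml hm)]

theorem ebar_cases : ∀ {T : CMT} {m : ℝ}, T.Valid → m ∈ T.leafLabels →
    T.ebar m = Set.Ici m ∨ ∃ d, m < d ∧ T.ebar m = Set.Ico m d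
  | leaf a, m, _, hm => Or.inl (by rw [Set.mem_singleton_iff.1 hm]; rfl)
  | node a l r, m, h, hm => by
      rcases (hm : m ∈ l.leafLabels ∪ r.leafLabels) with hml | hmr
      · rw [ebar_node_left hml]
        by_cases hc : m = l.minLeaf ∧ r.minLeaf < l.minLeaf
        · rw [if_pos hc]
          exact Or.inr ⟨a, lt_of_le_of_lt (leaf_le_label h.left.2 hml) h.2.1, rfl⟩
        · rw [if_neg hc]; exact ebar_cases h.left hml
      · rw [ebar_node_right h hmr]
        by_cases hc : m = r.minLeaf ∧ l.minLeaf < r.minLeaf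
        · rw [if_pos hc]
          exact Or.inr ⟨a, lt_of_le_of_lt (leaf_le_label h.right.2 hmr) h.2.2.1, rfl⟩
        · rw [if_neg hc]; exact ebar_cases h.right hmr

theorem mem_ebar_self {T : CMT} {m : ℝ} (h : T.Valid) (hm : m ∈ T.leafLabels) :
    m ∈ T.ebar m := by
  rcases ebar_cases h hm with he | ⟨d, hd, he⟩
  · rw [he]; exact le_refl m
  · rw [he]; exact ⟨le_refl m, hd⟩

theorem ebar_subset_Ici {T : CMT} {m : ℝ} (h : T.Valid) (hm : m ∈ T.leafLabels) :
    T.ebar m ⊆ Set.Ici m := by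
  rcases ebar_cases h hm with he | ⟨d, hd, he⟩
  · rw [he]
  · rw [he]; exact Set.Ico_subset_Ici_self

theorem mem_ebar_of {T : CMT} {m u t : ℝ} (h : T.Valid) (hm : m ∈ T.leafLabels)
    (h1 : m ≤ u) (h2 : u ≤ t) (ht : t ∈ T.ebar m) : u ∈ T.ebar m := by
  rcases ebar_cases h hm with he | ⟨d, hd, he⟩
  · rw [he]; exact h1
  · rw [he] at ht ⊢; exact ⟨h1, lt_of_le_of_lt h2 ht.2⟩

theorem sInf_ebar {T : CMT} {m : ℝ} (h : T.Valid) (hm : m ∈ T.leafLabels) :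
    sInf (T.ebar m) = m := by
  rcases ebar_cases h hm with he | ⟨d, hd, he⟩
  · rw [he]; exact csInf_Ici
  · rw [he]; exact csInf_Ico hd

theorem ebar_inj {T : CMT} {m m' : ℝ} (h : T.Valid) (hm : m ∈ T.leafLabels)
    (hm' : m' ∈ T.leafLabels) (he : T.ebar m = T.ebar m') : m = m' := by
  rw [← sInf_ebar h hm, ← sInf_ebar h hm', he]

theorem ebar_min : ∀ {T : CMT}, T.Valid → T.ebar T.minLeaf = Set.Ici T.minLeaf
  | leaf a, _ => rfl
  | node a l r, h => by
      rcases h.minLeaf_ne.lt_or_gt with hc | hc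
      · have hmin : (node a l r).minLeaf = l.minLeaf := min_eq_left (le_of_lt hc)
        rw [hmin, ebar_node_left l.minLeaf_mem,
          if_neg (fun hx => absurd hx.2 (not_lt.2 (le_of_lt hc))), ebar_min h.left]
      · have hmin : (node a l r).minLeaf = r.minLeaf := min_eq_right (le_of_lt hc)
        rw [hmin, ebar_node_right h r.minLeaf_mem,
          if_neg (fun hx => absurd hx.2 (not_lt.2 (le_of_lt hc))), ebar_min h.right]

theorem ebar_bounded : ∀ {T : CMT} {m : ℝ}, T.Valid → m ∈ T.leafLabels →
    m ≠ T.minLeaf → T.ebar m ⊆ Set.Iio T.label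
  | leaf a, m, _, hm, hne => absurd (Set.mem_singleton_iff.1 hm) hne
  | node a l r, m, h, hm, hne => by
      rcases (hm : m ∈ l.leafLabels ∪ r.leafLabels) with hml | hmr
      · rw [ebar_node_left hml]
        by_cases hc : m = l.minLeaf ∧ r.minLeaf < l.minLeaf
        · rw [if_pos hc]; exact Set.Ico_subset_Iio_self
        · rw [if_neg hc]
          have hne' : m ≠ l.minLeaf := by
            intro him
            rcases h.minLeaf_ne.lt_or_gt with hlt | hlt
            · exact hne (him.trans (min_eq_left (le_of_lt hlt)).symm)
            · exact hc ⟨him, hlt⟩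
          exact (ebar_bounded h.left hml hne').trans
            (Set.Iio_subset_Iio (le_of_lt h.2.1))
      · rw [ebar_node_right h hmr]
        by_cases hc : m = r.minLeaf ∧ l.minLeaf < r.minLeaf
        · rw [if_pos hc]; exact Set.Ico_subset_Iio_self
        · rw [if_neg hc]
          have hne' : m ≠ r.minLeaf := by
            intro him
            rcases h.minLeaf_ne.lt_or_gt with hlt | hlt
            · exact hc ⟨him, hlt⟩
            · exact hne (him.trans (min_eq_right (le_of_lt hlt)).symm)
          exact (ebar_bounded h.right hmr hne').trans
            (Set.Iio_subset_Iio (le_of_lt h.2.2.1))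

theorem Ici_ne_of_subset_Iio {s : Set ℝ} {x c : ℝ} (h : s ⊆ Set.Iio c) :
    Set.Ici x ≠ s := by
  intro he
  have h1 : max x c ∈ Set.Ici x := le_max_left x c
  rw [he] at h1
  exact absurd (h h1) (not_lt.2 (le_max_right x c))

end CMT
namespace CMT

theorem Ici_eq_Ici {x y : ℝ} (h : Set.Ici x = Set.Ici y) : x = y := by
  have h1 : y ∈ Set.Ici x := by rw [h]; exact Set.self_mem_Ici
  have h2 : x ∈ Set.Ici y := by rw [← h]; exact Set.self_mem_Ici
  exact le_antisymm h1 h2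

theorem elder_eq : ∀ {T : CMT}, T.Valid → T.Elder = T.ebar '' T.leafLabels
  | leaf a, _ => by simp [Elder, leafLabels, ebar]
  | node a l r, h => by
      have ihl := elder_eq h.left
      have ihr := elder_eq h.right
      rcases h.minLeaf_ne.lt_or_gt with hc | hc
      · -- l.minLeaf < r.minLeaf
        have hmax : max l.minLeaf r.minLeaf = r.minLeaf := max_eq_right (le_of_lt hc)
        have himl : ebar (node a l r) '' l.leafLabels = l.ebar '' l.leafLabels :=
          Set.image_congr (fun m hm => by
            rw [ebar_node_left hm, if_neg (fun hx => absurd hc (not_lt.2 (le_of_lt hx.2)))])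
        have hX : ∀ m ∈ r.leafLabels \ {r.minLeaf}, ebar (node a l r) m = r.ebar m := by
          intro m hm
          rw [ebar_node_right h hm.1, if_neg (fun hx => hm.2 hx.1)]
        have hnode_min : ebar (node a l r) r.minLeaf = Set.Ico r.minLeaf a := by
          rw [ebar_node_right h r.minLeaf_mem, if_pos ⟨rfl, hc⟩]
        have himr : ebar (node a l r) '' r.leafLabels
            = insert (Set.Ico r.minLeaf a) (r.ebar '' (r.leafLabels \ {r.minLeaf})) := by
          conv_lhs => rw [← Set.insert_eq_of_mem r.minLeaf_mem,
            ← Set.insert_diff_singleton]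
          rw [Set.image_insert_eq, hnode_min, Set.image_congr hX]
        have hEr : r.Elder
            = insert (Set.Ici r.minLeaf) (r.ebar '' (r.leafLabels \ {r.minLeaf})) := by
          rw [ihr]
          conv_lhs => rw [← Set.insert_eq_of_mem r.minLeaf_mem,
            ← Set.insert_diff_singleton]
          rw [Set.image_insert_eq, ebar_min h.right]
        have hnotmem : Set.Ici r.minLeaf
            ∉ l.Elder ∪ r.ebar '' (r.leafLabels \ {r.minLeaf}) := by
          rintro (hmem | hmem)
          · rw [ihl] at hmem
            obtain ⟨m, hm, hme⟩ := hmem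
            by_cases hmm : m = l.minLeaf
            · subst hmm
              rw [ebar_min h.left] at hme
              exact h.minLeaf_ne (Ici_eq_Ici hme)
            · exact Ici_ne_of_subset_Iio (ebar_bounded h.left hm hmm) hme.symm
          · obtain ⟨m, hm, hme⟩ := hmem
            exact Ici_ne_of_subset_Iio (ebar_bounded h.right hm.1 hm.2) hme.symm
        show insert (Set.Ico (max l.minLeaf r.minLeaf) a)
            ((l.Elder ∪ r.Elder) \ {Set.Ici (max l.minLeaf r.minLeaf)})
          = ebar (node a l r) '' (l.leafLabels ∪ r.leafLabels)
        rw [Set.image_union, himl, himr, ← ihl, hmax, hEr, Set.union_insert,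
          Set.insert_diff_self_of_notMem hnotmem, Set.union_insert]
      · -- r.minLeaf < l.minLeaf
        have hmax : max l.minLeaf r.minLeaf = l.minLeaf := max_eq_left (le_of_lt hc)
        have himr : ebar (node a l r) '' r.leafLabels = r.ebar '' r.leafLabels :=
          Set.image_congr (fun m hm => by
            rw [ebar_node_right h hm, if_neg (fun hx => absurd hc (not_lt.2 (le_of_lt hx.2)))])
        have hX : ∀ m ∈ l.leafLabels \ {l.minLeaf}, ebar (node a l r) m = l.ebar m := by
          intro m hm
          rw [ebar_node_left hm.1, if_neg (fun hx => hm.2 hx.1)]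
        have hnode_min : ebar (node a l r) l.minLeaf = Set.Ico l.minLeaf a := by
          rw [ebar_node_left l.minLeaf_mem, if_pos ⟨rfl, hc⟩]
        have himl : ebar (node a l r) '' l.leafLabels
            = insert (Set.Ico l.minLeaf a) (l.ebar '' (l.leafLabels \ {l.minLeaf})) := by
          conv_lhs => rw [← Set.insert_eq_of_mem l.minLeaf_mem,
            ← Set.insert_diff_singleton]
          rw [Set.image_insert_eq, hnode_min, Set.image_congr hX]
        have hEl : l.Elder
            = insert (Set.Ici l.minLeaf) (l.ebar '' (l.leafLabels \ {l.minLeaf})) := by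
          rw [ihl]
          conv_lhs => rw [← Set.insert_eq_of_mem l.minLeaf_mem,
            ← Set.insert_diff_singleton]
          rw [Set.image_insert_eq, ebar_min h.left]
        have hnotmem : Set.Ici l.minLeaf
            ∉ l.ebar '' (l.leafLabels \ {l.minLeaf}) ∪ r.Elder := by
          rintro (hmem | hmem)
          · obtain ⟨m, hm, hme⟩ := hmem
            exact Ici_ne_of_subset_Iio (ebar_bounded h.left hm.1 hm.2) hme.symm
          · rw [ihr] at hmem
            obtain ⟨m, hm, hme⟩ := hmem
            by_cases hmm : m = r.minLeaf
            · subst hmm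
              rw [ebar_min h.right] at hme
              exact h.minLeaf_ne (Ici_eq_Ici hme).symm
            · exact Ici_ne_of_subset_Iio (ebar_bounded h.right hm hmm) hme.symm
        show insert (Set.Ico (max l.minLeaf r.minLeaf) a)
            ((l.Elder ∪ r.Elder) \ {Set.Ici (max l.minLeaf r.minLeaf)})
          = ebar (node a l r) '' (l.leafLabels ∪ r.leafLabels)
        rw [Set.image_union, himl, himr, ← ihr, hmax, hEl, Set.insert_union,
          Set.insert_diff_self_of_notMem hnotmem, Set.insert_union]

theorem ebar_mem_elder {T : CMT} {m : ℝ} (h : T.Valid) (hm : m ∈ T.leafLabels) :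
    T.ebar m ∈ T.Elder := by
  rw [elder_eq h]; exact ⟨m, hm, rfl⟩

theorem elder_nonempty {T : CMT} (h : T.Valid) : T.Elder.Nonempty :=
  ⟨_, ebar_mem_elder h T.minLeaf_mem⟩

end CMT
namespace CMT

/-! ### Addresses -/

/-- Total version of `subtree?`. -/
def subAt : CMT → List Bool → CMT
  | t, [] => t
  | leaf a, _ :: _ => leaf a
  | node _ l _, false :: w => subAt l w
  | node _ _ r, true :: w => subAt r w

/-- The address of the component node of the leaf with label `m` at time `t`. -/
noncomputable def waddr : CMT → ℝ → ℝ → List Bool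
  | leaf _, _, _ => []
  | node a l r, t, m =>
      if a ≤ t then []
      else if m ∈ l.leafLabels then false :: waddr l t m else true :: waddr r t m

theorem subAt_nil : ∀ (T : CMT), T.subAt [] = T := fun T => by cases T <;> rfl

theorem subtree?_nil : ∀ (T : CMT), T.subtree? [] = some T := fun T => by cases T <;> rfl

theorem subAt_leaf {a : ℝ} : ∀ {w : List Bool}, (leaf a).subAt w = leaf a
  | [] => rfl
  | _ :: _ => rfl

theorem subAt_append : ∀ (T : CMT) (u v : List Bool), T.subAt (u ++ v) = (T.subAt u).subAt v
  | T, [], v => by rw [List.nil_append, subAt_nil]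
  | leaf a, _ :: _, v => by simp [subAt_leaf]
  | node _ l _, false :: u, v => subAt_append l u v
  | node _ _ r, true :: u, v => subAt_append r u v

theorem leafLabels_subAt : ∀ (T : CMT) (w : List Bool), (T.subAt w).leafLabels ⊆ T.leafLabels
  | T, [] => by rw [subAt_nil]
  | leaf _, _ :: _ => subset_rfl
  | node _ l _, false :: w => (leafLabels_subAt l w).trans Set.subset_union_left
  | node _ _ r, true :: w => (leafLabels_subAt r w).trans Set.subset_union_right

theorem localValid_subAt : ∀ {T : CMT} (w : List Bool), T.LocalValid → (T.subAt w).LocalValid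
  | T, [], h => by rwa [subAt_nil]
  | leaf _, _ :: _, h => h
  | node _ l _, false :: w, h => localValid_subAt w h.2.2.1
  | node _ _ r, true :: w, h => localValid_subAt w h.2.2.2

theorem label_subAt_le : ∀ {T : CMT} (w : List Bool), T.LocalValid → (T.subAt w).label ≤ T.label
  | T, [], _ => by rw [subAt_nil]
  | leaf _, _ :: _, _ => le_refl _
  | node _ l _, false :: w, h => (label_subAt_le w h.2.2.1).trans (le_of_lt h.1)
  | node _ _ r, true :: w, h => (label_subAt_le w h.2.2.2).trans (le_of_lt h.2.1)

theorem subtree?_eq_subAt : ∀ {T : CMT} {w : List Bool} {s : CMT},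
    T.subtree? w = some s → T.subAt w = s
  | T, [], s, h => by rw [subtree?_nil] at h; rw [subAt_nil]; exact Option.some.inj h
  | leaf _, _ :: _, _, h => by simp [subtree?] at h
  | node _ l _, false :: w, s, h => subtree?_eq_subAt (T := l) h
  | node _ _ r, true :: w, s, h => subtree?_eq_subAt (T := r) h

theorem subtree?_prefix : ∀ {T : CMT} {w u : List Bool} {s : CMT},
    T.subtree? w = some s → u <+: w → ∃ s', T.subtree? u = some s'
  | T, w, [], s, _, _ => ⟨T, subtree?_nil T⟩
  | leaf a, w, _ :: _, s, hw, hu => by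
      rcases hu with ⟨x, hx⟩
      subst hx
      simp [subtree?] at hw
  | node a l r, w, b :: u, s, hw, hu => by
      rcases hu with ⟨x, hx⟩
      subst hx
      cases b
      · exact subtree?_prefix (T := l) hw ⟨x, rfl⟩
      · exact subtree?_prefix (T := r) hw ⟨x, rfl⟩

theorem memS_subAt : {T : CMT} → {t : ℝ} → {w : List Bool} → T.MemS t w →
    T.subtree? w = some (T.subAt w) := by
  intro T t w hw
  obtain ⟨⟨a, ha, -⟩, -⟩ := hw
  rw [nodeLabel?, Option.map_eq_some_iff] at ha
  obtain ⟨s, hs, -⟩ := ha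
  rw [hs, subtree?_eq_subAt hs]

theorem memS_label_le {T : CMT} {t : ℝ} {w : List Bool} (hw : T.MemS t w) :
    (T.subAt w).label ≤ t := by
  obtain ⟨⟨a, ha, hat⟩, -⟩ := hw
  rw [nodeLabel?, Option.map_eq_some_iff] at ha
  obtain ⟨s, hs, hlab⟩ := ha
  rw [subtree?_eq_subAt hs, hlab]
  exact hat

theorem memS_of_cons_false {a t : ℝ} {l r : CMT} {w : List Bool}
    (h : (node a l r).MemS t (false :: w)) : l.MemS t w := by
  obtain ⟨h1, h2⟩ := h
  refine ⟨h1, fun a' hne hlab => ?_⟩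
  have : (false :: w).dropLast = false :: w.dropLast := List.dropLast_cons_of_ne_nil hne
  exact h2 a' (by simp) (by rw [this]; exact hlab)

theorem memS_of_cons_true {a t : ℝ} {l r : CMT} {w : List Bool}
    (h : (node a l r).MemS t (true :: w)) : r.MemS t w := by
  obtain ⟨h1, h2⟩ := h
  refine ⟨h1, fun a' hne hlab => ?_⟩
  have : (true :: w).dropLast = true :: w.dropLast := List.dropLast_cons_of_ne_nil hne
  exact h2 a' (by simp) (by rw [this]; exact hlab)

theorem label_subAt_waddr_le : ∀ {T : CMT} {t m : ℝ}, T.Valid → m ∈ T.leafLabels →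
    m ≤ t → (T.subAt (T.waddr t m)).label ≤ t
  | leaf a, t, m, _, hm, hmt => by
      rw [waddr, subAt]
      exact (Set.mem_singleton_iff.1 hm) ▸ hmt
  | node a l r, t, m, h, hm, hmt => by
      rw [waddr]
      by_cases ha : a ≤ t
      · rw [if_pos ha]; exact ha
      · rw [if_neg ha]
        rcases (hm : m ∈ l.leafLabels ∪ r.leafLabels) with hml | hmr
        · rw [if_pos hml]
          exact label_subAt_waddr_le h.left hml hmt
        · rw [if_neg (fun hx => h.not_mem_right hx hmr)]
          exact label_subAt_waddr_le h.right hmr hmt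

theorem mem_leafLabels_subAt_waddr : ∀ {T : CMT} {t m : ℝ}, T.Valid → m ∈ T.leafLabels →
    m ≤ t → m ∈ (T.subAt (T.waddr t m)).leafLabels
  | leaf a, t, m, _, hm, _ => by rw [waddr, subAt]; exact hm
  | node a l r, t, m, h, hm, hmt => by
      rw [waddr]
      by_cases ha : a ≤ t
      · rw [if_pos ha]; exact hm
      · rw [if_neg ha]
        rcases (hm : m ∈ l.leafLabels ∪ r.leafLabels) with hml | hmr
        · rw [if_pos hml]
          exact mem_leafLabels_subAt_waddr h.left hml hmt
        · rw [if_neg (fun hx => h.not_mem_right hx hmr)]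
          exact mem_leafLabels_subAt_waddr h.right hmr hmt

theorem subtree?_waddr : ∀ {T : CMT} {t m : ℝ}, T.Valid → m ∈ T.leafLabels →
    m ≤ t → T.subtree? (T.waddr t m) = some (T.subAt (T.waddr t m))
  | leaf a, t, m, _, _, _ => rfl
  | node a l r, t, m, h, hm, hmt => by
      rw [waddr]
      by_cases ha : a ≤ t
      · rw [if_pos ha]; rfl
      · rw [if_neg ha]
        rcases (hm : m ∈ l.leafLabels ∪ r.leafLabels) with hml | hmr
        · rw [if_pos hml]
          exact subtree?_waddr h.left hml hmt
        · rw [if_neg (fun hx => h.not_mem_right hx hmr)]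
          exact subtree?_waddr h.right hmr hmt

theorem waddr_parent : ∀ {T : CMT} {t m a' : ℝ}, T.Valid → m ∈ T.leafLabels → m ≤ t →
    T.waddr t m ≠ [] → T.nodeLabel? (T.waddr t m).dropLast = some a' → t < a'
  | leaf a, t, m, a', _, _, _, hne, _ => absurd rfl hne
  | node a l r, t, m, a', h, hm, hmt, hne, hlab => by
      rw [waddr] at hne hlab
      by_cases ha : a ≤ t
      · rw [if_pos ha] at hne; exact absurd rfl hne
      · rw [if_neg ha] at hne hlab
        rcases (hm : m ∈ l.leafLabels ∪ r.leafLabels) with hml | hmr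
        · rw [if_pos hml] at hne hlab
          by_cases hu : l.waddr t m = []
          · rw [hu] at hlab
            have : a' = a := by
              simpa [nodeLabel?, subtree?, label] using hlab.symm
            rw [this]; exact not_le.1 ha
          · rw [List.dropLast_cons_of_ne_nil hu] at hlab
            exact waddr_parent h.left hml hmt hu hlab
        · rw [if_neg (fun hx => h.not_mem_right hx hmr)] at hne hlab
          by_cases hu : r.waddr t m = []
          · rw [hu] at hlab
            have : a' = a := by
              simpa [nodeLabel?, subtree?, label] using hlab.symm
            rw [this]; exact not_le.1 ha
          · rw [List.dropLast_cons_of_ne_nil hu] at hlab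
            exact waddr_parent h.right hmr hmt hu hlab

theorem memS_waddr {T : CMT} {t m : ℝ} (h : T.Valid) (hm : m ∈ T.leafLabels)
    (hmt : m ≤ t) : T.MemS t (T.waddr t m) := by
  constructor
  · refine ⟨(T.subAt (T.waddr t m)).label, ?_, label_subAt_waddr_le h hm hmt⟩
    rw [nodeLabel?, subtree?_waddr h hm hmt, Option.map_some]
  · exact fun a' hne hlab => waddr_parent h hm hmt hne hlab

end CMT
namespace CMT

theorem memS_root_lt : ∀ {T : CMT} {t : ℝ} {b : Bool} {w' : List Bool}, T.Valid →
    T.MemS t (b :: w') → t < T.label := by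
  intro T t b w' h hw
  have hsub : T.subtree? (b :: w') = some (T.subAt (b :: w')) := memS_subAt hw
  obtain ⟨s', hs'⟩ := subtree?_prefix hsub (List.dropLast_prefix _)
  have hlt : t < s'.label := hw.2 s'.label (by simp)
    (by rw [nodeLabel?, hs', Option.map_some])
  rw [← subtree?_eq_subAt hs'] at hlt
  exact lt_of_lt_of_le hlt (label_subAt_le _ h.2)

theorem memS_eq_waddr : ∀ {T : CMT} {t : ℝ} {w : List Bool}, T.Valid → T.MemS t w →
    w = T.waddr t (T.subAt w).minLeaf
  | leaf a, t, w, _, hw => by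
      cases w with
      | nil => rw [waddr]
      | cons b w' =>
          obtain ⟨⟨a', ha', -⟩, -⟩ := hw
          rw [nodeLabel?] at ha'
          simp [subtree?] at ha'
  | node a l r, t, w, h, hw => by
      cases w with
      | nil =>
          have hat : a ≤ t := by
            have := memS_label_le hw
            rwa [subAt_nil] at this
          rw [waddr, if_pos hat]
      | cons b w' =>
          have hta : t < a := memS_root_lt h hw
          cases b
          · have hm : ((node a l r).subAt (false :: w')).minLeaf ∈ l.leafLabels := by
              simp only [subAt]
              exact leafLabels_subAt l w' (minLeaf_mem _)
            rw [waddr, if_neg (not_le.2 hta), if_pos hm]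
            have := memS_eq_waddr h.left (memS_of_cons_false hw)
            simp only [subAt]
            exact congrArg (List.cons false) this
          · have hmr : ((node a l r).subAt (true :: w')).minLeaf ∈ r.leafLabels := by
              simp only [subAt]
              exact leafLabels_subAt r w' (minLeaf_mem _)
            rw [waddr, if_neg (not_le.2 hta),
              if_neg (fun hx => h.not_mem_right hx hmr)]
            have := memS_eq_waddr h.right (memS_of_cons_true hw)
            simp only [subAt]
            exact congrArg (List.cons true) this

theorem waddr_congr : ∀ {T : CMT} {t m m' : ℝ}, T.Valid → m ∈ T.leafLabels → m ≤ t →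
    m' ∈ (T.subAt (T.waddr t m)).leafLabels → m' ≤ t → T.waddr t m' = T.waddr t m
  | leaf _, _, _, _, _, _, _, _, _ => rfl
  | node a l r, t, m, m', h, hm, hmt, hm', hmt' => by
      by_cases ha : a ≤ t
      · rw [waddr, if_pos ha, waddr, if_pos ha]
      · rcases (hm : m ∈ l.leafLabels ∪ r.leafLabels) with hml | hmr
        · have H : (node a l r).waddr t m = false :: l.waddr t m := by
            rw [waddr, if_neg ha, if_pos hml]
          rw [H] at hm'
          simp only [subAt] at hm'
          have hm'l : m' ∈ l.leafLabels := leafLabels_subAt l _ hm'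
          rw [H, waddr, if_neg ha, if_pos hm'l,
            waddr_congr h.left hml hmt hm' hmt']
        · have H : (node a l r).waddr t m = true :: r.waddr t m := by
            rw [waddr, if_neg ha, if_neg (fun hx => h.not_mem_right hx hmr)]
          rw [H] at hm'
          simp only [subAt] at hm'
          have hm'r : m' ∈ r.leafLabels := leafLabels_subAt r _ hm'
          rw [H, waddr, if_neg ha, if_neg (fun hx => h.not_mem_right hx hm'r),
            waddr_congr h.right hmr hmt hm' hmt']

theorem memS_prefix_eq {T : CMT} {r t : ℝ} {u v : List Bool} (h : T.Valid)
    (hu : T.MemS t u) (hv : T.MemS r v) (hpre : u <+: v) (hrt : r ≤ t) :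
    u = T.waddr t (T.subAt v).minLeaf := by
  obtain ⟨x, hx⟩ := hpre
  subst hx
  have hEq := memS_eq_waddr h hu
  have hmu_mem : (T.subAt u).minLeaf ∈ T.leafLabels :=
    leafLabels_subAt T u (minLeaf_mem _)
  have hmu_t : (T.subAt u).minLeaf ≤ t :=
    le_trans (minLeaf_le_label (localValid_subAt u h.2)) (memS_label_le hu)
  have hmv_mem' : (T.subAt (u ++ x)).minLeaf ∈ (T.subAt u).leafLabels := by
    rw [subAt_append]
    exact leafLabels_subAt _ x (minLeaf_mem _)
  have hmv_t : (T.subAt (u ++ x)).minLeaf ≤ t :=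
    le_trans (le_trans (minLeaf_le_label (localValid_subAt _ h.2)) (memS_label_le hv)) hrt
  have hmv_mem'' : (T.subAt (u ++ x)).minLeaf
      ∈ (T.subAt (T.waddr t (T.subAt u).minLeaf)).leafLabels := by
    rw [← hEq]; exact hmv_mem'
  exact hEq.trans (waddr_congr h hmu_mem hmu_t hmv_mem'' hmv_t).symm

theorem alive_iff : ∀ {T : CMT} {t m : ℝ}, T.Valid → m ∈ T.leafLabels → m ≤ t →
    (((T.subAt (T.waddr t m)).minLeaf = m) ↔ t ∈ T.ebar m)
  | leaf a, t, m, _, hm, hmt => by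
      have hma : m = a := Set.mem_singleton_iff.1 hm
      subst hma
      have h1 : ((leaf m).subAt ((leaf m).waddr t m)).minLeaf = m := by
        rw [waddr, subAt_nil]
        rfl
      have h2 : t ∈ (leaf m).ebar m := hmt
      simp [h1, h2]
  | node a l r, t, m, h, hm, hmt => by
      by_cases ha : a ≤ t
      · have hw : (node a l r).waddr t m = [] := by rw [waddr, if_pos ha]
        rw [hw, subAt_nil]
        by_cases hmin : m = (node a l r).minLeaf
        · have h1 : (node a l r).minLeaf = m := hmin.symm
          have h2 : t ∈ (node a l r).ebar m := by
            rw [hmin, ebar_min h]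
            exact hmin ▸ hmt
          simp [h1, h2]
        · have h1 : ¬((node a l r).minLeaf = m) := fun hx => hmin hx.symm
          have h2 : t ∉ (node a l r).ebar m := fun ht =>
            absurd (ebar_bounded h hm hmin ht) (not_lt.2 ha)
          simp [h1, h2]
      · rcases (hm : m ∈ l.leafLabels ∪ r.leafLabels) with hml | hmr
        · have hw : (node a l r).waddr t m = false :: l.waddr t m := by
            rw [waddr, if_neg ha, if_pos hml]
          rw [hw]
          simp only [subAt]
          rw [alive_iff h.left hml hmt, ebar_node_left hml]
          by_cases hc : m = l.minLeaf ∧ r.minLeaf < l.minLeaf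
          · rw [if_pos hc]
            have h1 : t ∈ l.ebar m := by
              rw [hc.1, ebar_min h.left]
              exact hc.1 ▸ hmt
            have h2 : t ∈ Set.Ico m a := ⟨hmt, not_le.1 ha⟩
            simp [h1, h2]
          · rw [if_neg hc]
        · have hw : (node a l r).waddr t m = true :: r.waddr t m := by
            rw [waddr, if_neg ha, if_neg (fun hx => h.not_mem_right hx hmr)]
          rw [hw]
          simp only [subAt]
          rw [alive_iff h.right hmr hmt, ebar_node_right h hmr]
          by_cases hc : m = r.minLeaf ∧ l.minLeaf < r.minLeaf
          · rw [if_pos hc]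
            have h1 : t ∈ r.ebar m := by
              rw [hc.1, ebar_min h.right]
              exact hc.1 ▸ hmt
            have h2 : t ∈ Set.Ico m a := ⟨hmt, not_le.1 ha⟩
            simp [h1, h2]
          · rw [if_neg hc]

end CMT
namespace CMT

theorem suffix_append_both {α} {u v w : List α} (h : u <:+ v) : u ++ w <:+ v ++ w := by
  obtain ⟨s, rfl⟩ := h
  exact ⟨s, (List.append_assoc _ _ _).symm⟩

theorem suffix_append_left' {α} {u v w : List α} (h : u <:+ v) : u <:+ w ++ v := by
  obtain ⟨s, rfl⟩ := h
  exact ⟨w ++ s, List.append_assoc _ _ _⟩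

/-- The elder succession of the leaf `m`: `m`, then the leaf whose bar swallows
the bar of `m`, and so on down to the globally minimal leaf. -/
noncomputable def chain : CMT → ℝ → List ℝ
  | leaf a, _ => [a]
  | node _ l r, m =>
      if m ∈ l.leafLabels then
        chain l m ++ (if r.minLeaf < l.minLeaf then chain r r.minLeaf else [])
      else
        chain r m ++ (if l.minLeaf < r.minLeaf then chain l l.minLeaf else [])

theorem chain_node_left {a m : ℝ} {l r : CMT} (hm : m ∈ l.leafLabels) :
    chain (node a l r) m
      = chain l m ++ (if r.minLeaf < l.minLeaf then chain r r.minLeaf else []) := by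
  rw [chain, if_pos hm]

theorem chain_node_right {a m : ℝ} {l r : CMT} (h : (node a l r).Valid)
    (hm : m ∈ r.leafLabels) :
    chain (node a l r) m
      = chain r m ++ (if l.minLeaf < r.minLeaf then chain l l.minLeaf else []) := by
  rw [chain, if_neg (fun hx => h.not_mem_right hx hm)]

theorem chain_cons_exists : ∀ {T : CMT} {m : ℝ}, T.Valid → m ∈ T.leafLabels →
    ∃ tl, T.chain m = m :: tl
  | leaf a, m, _, hm => ⟨[], by rw [Set.mem_singleton_iff.1 hm]; rfl⟩
  | node a l r, m, h, hm => by
      rcases (hm : m ∈ l.leafLabels ∪ r.leafLabels) with hml | hmr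
      · obtain ⟨tl, htl⟩ := chain_cons_exists h.left hml
        exact ⟨tl ++ _, by rw [chain_node_left hml, htl, List.cons_append]⟩
      · obtain ⟨tl, htl⟩ := chain_cons_exists h.right hmr
        exact ⟨tl ++ _, by rw [chain_node_right h hmr, htl, List.cons_append]⟩

theorem chain_minLeaf : ∀ {T : CMT}, T.Valid → T.chain T.minLeaf = [T.minLeaf]
  | leaf a, _ => rfl
  | node a l r, h => by
      rcases h.minLeaf_ne.lt_or_gt with hc | hc
      · have hmin : (node a l r).minLeaf = l.minLeaf := min_eq_left (le_of_lt hc)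
        rw [hmin, chain_node_left l.minLeaf_mem, if_neg (not_lt.2 (le_of_lt hc)),
          List.append_nil, chain_minLeaf h.left]
      · have hmin : (node a l r).minLeaf = r.minLeaf := min_eq_right (le_of_lt hc)
        rw [hmin, chain_node_right h r.minLeaf_mem, if_neg (not_lt.2 (le_of_lt hc)),
          List.append_nil, chain_minLeaf h.right]

theorem chain_mem : ∀ {T : CMT} {m c : ℝ}, T.Valid → m ∈ T.leafLabels →
    c ∈ T.chain m → c ∈ T.leafLabels ∧ c ≤ m
  | leaf a, m, c, _, hm, hc => by
      have hma : m = a := Set.mem_singleton_iff.1 hm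
      subst hma
      have : c = m := by simpa [chain] using hc
      subst this
      exact ⟨hm, le_refl _⟩
  | node a l r, m, c, h, hm, hc => by
      rcases (hm : m ∈ l.leafLabels ∪ r.leafLabels) with hml | hmr
      · rw [chain_node_left hml, List.mem_append] at hc
        rcases hc with hc | hc
        · obtain ⟨h1, h2⟩ := chain_mem h.left hml hc
          exact ⟨Set.mem_union_left _ h1, h2⟩
        · by_cases hlt : r.minLeaf < l.minLeaf
          · rw [if_pos hlt] at hc
            obtain ⟨h1, h2⟩ := chain_mem h.right r.minLeaf_mem hc
            exact ⟨Set.mem_union_right _ h1,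
              le_trans h2 (le_of_lt (lt_of_lt_of_le hlt (minLeaf_le hml)))⟩
          · rw [if_neg hlt] at hc
            exact absurd hc List.not_mem_nil
      · rw [chain_node_right h hmr, List.mem_append] at hc
        rcases hc with hc | hc
        · obtain ⟨h1, h2⟩ := chain_mem h.right hmr hc
          exact ⟨Set.mem_union_right _ h1, h2⟩
        · by_cases hlt : l.minLeaf < r.minLeaf
          · rw [if_pos hlt] at hc
            obtain ⟨h1, h2⟩ := chain_mem h.left l.minLeaf_mem hc
            exact ⟨Set.mem_union_left _ h1,
              le_trans h2 (le_of_lt (lt_of_lt_of_le hlt (minLeaf_le hmr)))⟩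
          · rw [if_neg hlt] at hc
            exact absurd hc List.not_mem_nil

theorem chain_min_suffix : ∀ {T : CMT} {m : ℝ}, T.Valid → m ∈ T.leafLabels →
    [T.minLeaf] <:+ T.chain m
  | leaf a, m, _, hm => by
      rw [Set.mem_singleton_iff.1 hm]
      exact List.suffix_rfl
  | node a l r, m, h, hm => by
      rcases (hm : m ∈ l.leafLabels ∪ r.leafLabels) with hml | hmr
      · rw [chain_node_left hml]
        by_cases hlt : r.minLeaf < l.minLeaf
        · rw [if_pos hlt]
          have : (node a l r).minLeaf = r.minLeaf := min_eq_right (le_of_lt hlt)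
          rw [this]
          exact suffix_append_left' (chain_min_suffix h.right r.minLeaf_mem)
        · rw [if_neg hlt, List.append_nil]
          have hle : l.minLeaf ≤ r.minLeaf := not_lt.1 hlt
          have : (node a l r).minLeaf = l.minLeaf := min_eq_left hle
          rw [this]
          exact chain_min_suffix h.left hml
      · rw [chain_node_right h hmr]
        by_cases hlt : l.minLeaf < r.minLeaf
        · rw [if_pos hlt]
          have : (node a l r).minLeaf = l.minLeaf := min_eq_left (le_of_lt hlt)
          rw [this]
          exact suffix_append_left' (chain_min_suffix h.left l.minLeaf_mem)
        · rw [if_neg hlt, List.append_nil]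
          have : (node a l r).minLeaf = r.minLeaf := min_eq_right (not_lt.1 hlt)
          rw [this]
          exact chain_min_suffix h.right hmr

theorem chain_tail : ∀ {T : CMT} {m : ℝ}, T.Valid → m ∈ T.leafLabels →
    m ≠ T.minLeaf → ∃ m', m' ∈ T.leafLabels ∧ m' < m ∧ (T.chain m).tail = T.chain m'
  | leaf a, m, _, hm, hne => absurd (Set.mem_singleton_iff.1 hm) hne
  | node a l r, m, h, hm, hne => by
      rcases (hm : m ∈ l.leafLabels ∪ r.leafLabels) with hml | hmr
      · obtain ⟨tl, htl⟩ := chain_cons_exists h.left hml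
        by_cases hmm : m = l.minLeaf
        · have hlt : r.minLeaf < l.minLeaf := by
            rcases h.minLeaf_ne.lt_or_gt with hx | hx
            · exact absurd (hmm.trans (min_eq_left (le_of_lt hx)).symm) hne
            · exact hx
          have hsing : l.chain m = [m] := by
            rw [hmm]; exact chain_minLeaf h.left
          refine ⟨r.minLeaf, Set.mem_union_right _ r.minLeaf_mem,
            lt_of_lt_of_le hlt (le_of_eq hmm.symm), ?_⟩
          rw [chain_node_left hml, hsing, if_pos hlt, List.singleton_append,
            List.tail_cons, chain_node_right h r.minLeaf_mem,
            if_neg (not_lt.2 (le_of_lt hlt)), List.append_nil]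
        · obtain ⟨m', hm'1, hm'2, hm'3⟩ := chain_tail h.left hml hmm
          refine ⟨m', Set.mem_union_left _ hm'1, hm'2, ?_⟩
          rw [chain_node_left hml, chain_node_left hm'1, ← hm'3, htl,
            List.cons_append, List.tail_cons, List.tail_cons]
      · obtain ⟨tl, htl⟩ := chain_cons_exists h.right hmr
        by_cases hmm : m = r.minLeaf
        · have hlt : l.minLeaf < r.minLeaf := by
            rcases h.minLeaf_ne.lt_or_gt with hx | hx
            · exact hx
            · exact absurd (hmm.trans (min_eq_right (le_of_lt hx)).symm) hne
          have hsing : r.chain m = [m] := by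
            rw [hmm]; exact chain_minLeaf h.right
          refine ⟨l.minLeaf, Set.mem_union_left _ l.minLeaf_mem,
            lt_of_lt_of_le hlt (le_of_eq hmm.symm), ?_⟩
          rw [chain_node_right h hmr, hsing, if_pos hlt, List.singleton_append,
            List.tail_cons, chain_node_left l.minLeaf_mem,
            if_neg (not_lt.2 (le_of_lt hlt)), List.append_nil]
        · obtain ⟨m', hm'1, hm'2, hm'3⟩ := chain_tail h.right hmr hmm
          refine ⟨m', Set.mem_union_right _ hm'1, hm'2, ?_⟩
          rw [chain_node_right h hmr, chain_node_right h hm'1, ← hm'3, htl,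
            List.cons_append, List.tail_cons, List.tail_cons]

theorem chain_pairwise : ∀ {T : CMT} {m : ℝ}, T.Valid → m ∈ T.leafLabels →
    (T.chain m).Pairwise (· > ·)
  | leaf a, m, _, hm => by simp [chain]
  | node a l r, m, h, hm => by
      rcases (hm : m ∈ l.leafLabels ∪ r.leafLabels) with hml | hmr
      · rw [chain_node_left hml, List.pairwise_append]
        refine ⟨chain_pairwise h.left hml, ?_, ?_⟩
        · by_cases hlt : r.minLeaf < l.minLeaf
          · rw [if_pos hlt]; exact chain_pairwise h.right r.minLeaf_mem
          · rw [if_neg hlt]; exact List.Pairwise.nil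
        · intro c hc c' hc'
          by_cases hlt : r.minLeaf < l.minLeaf
          · rw [if_pos hlt] at hc'
            have h1 : l.minLeaf ≤ c := minLeaf_le (chain_mem h.left hml hc).1
            have h2 : c' ≤ r.minLeaf := (chain_mem h.right r.minLeaf_mem hc').2
            exact lt_of_le_of_lt h2 (lt_of_lt_of_le hlt h1)
          · rw [if_neg hlt] at hc'
            exact absurd hc' List.not_mem_nil
      · rw [chain_node_right h hmr, List.pairwise_append]
        refine ⟨chain_pairwise h.right hmr, ?_, ?_⟩
        · by_cases hlt : l.minLeaf < r.minLeaf
          · rw [if_pos hlt]; exact chain_pairwise h.left l.minLeaf_mem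
          · rw [if_neg hlt]; exact List.Pairwise.nil
        · intro c hc c' hc'
          by_cases hlt : l.minLeaf < r.minLeaf
          · rw [if_pos hlt] at hc'
            have h1 : r.minLeaf ≤ c := minLeaf_le (chain_mem h.right hmr hc).1
            have h2 : c' ≤ l.minLeaf := (chain_mem h.left l.minLeaf_mem hc').2
            exact lt_of_le_of_lt h2 (lt_of_lt_of_le hlt h1)
          · rw [if_neg hlt] at hc'
            exact absurd hc' List.not_mem_nil

theorem chain_nodup {T : CMT} {m : ℝ} (h : T.Valid) (hm : m ∈ T.leafLabels) :
    (T.chain m).Nodup :=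
  (chain_pairwise h hm).imp (fun hgt => ne_of_gt hgt)

theorem chain_alive : ∀ {T : CMT} {m t c : ℝ}, T.Valid → m ∈ T.leafLabels →
    t ∈ T.ebar m → c ∈ T.chain m → t ∈ T.ebar c
  | leaf a, m, t, c, _, hm, ht, hc => by
      have hma : m = a := Set.mem_singleton_iff.1 hm
      subst hma
      have : c = m := by simpa [chain] using hc
      subst this
      exact ht
  | node a l r, m, t, c, h, hm, ht, hc => by
      rcases (hm : m ∈ l.leafLabels ∪ r.leafLabels) with hml | hmr
      · rw [chain_node_left hml, List.mem_append] at hc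
        rw [ebar_node_left hml] at ht
        by_cases hc2 : m = l.minLeaf ∧ r.minLeaf < l.minLeaf
        · rw [if_pos hc2] at ht
          rcases hc with hc | hc
          · -- c ∈ chain l m, m = l.minLeaf so chain l m = [m]
            have : c = m := by
              rw [hc2.1, chain_minLeaf h.left, ← hc2.1] at hc
              simpa using hc
            subst this
            rw [ebar_node_left hml, if_pos hc2]
            exact ht
          · rw [if_pos hc2.2] at hc
            have htr : t ∈ r.ebar r.minLeaf := by
              rw [ebar_min h.right]
              exact le_trans (le_of_lt (lt_of_lt_of_le hc2.2 (le_of_eq hc2.1.symm))) ht.1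
            have hcr := chain_alive h.right r.minLeaf_mem htr hc
            have hcl : c ∈ r.leafLabels := (chain_mem h.right r.minLeaf_mem hc).1
            rw [ebar_node_right h hcl,
              if_neg (fun hx => absurd hc2.2 (not_lt.2 (le_of_lt hx.2)))]
            exact hcr
        · rw [if_neg hc2] at ht
          rcases hc with hc | hc
          · have hcl : c ∈ l.leafLabels := (chain_mem h.left hml hc).1
            have hcal := chain_alive h.left hml ht hc
            rw [ebar_node_left hcl]
            by_cases hc3 : c = l.minLeaf ∧ r.minLeaf < l.minLeaf
            · rw [if_pos hc3]
              have hmne : m ≠ l.minLeaf := fun hx => hc2 ⟨hx, hc3.2⟩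
              have hta : t < a :=
                lt_trans (Set.mem_Iio.1 (ebar_bounded h.left hml hmne ht)) h.2.1
              exact ⟨ebar_subset_Ici h.left hcl hcal, hta⟩
            · rw [if_neg hc3]
              exact hcal
          · by_cases hlt : r.minLeaf < l.minLeaf
            · rw [if_pos hlt] at hc
              have hmt : m ≤ t := ebar_subset_Ici h.left hml ht
              have htr : t ∈ r.ebar r.minLeaf := by
                rw [ebar_min h.right]
                exact le_trans (le_of_lt (lt_of_lt_of_le hlt (minLeaf_le hml))) hmt
              have hcr := chain_alive h.right r.minLeaf_mem htr hc
              have hcl : c ∈ r.leafLabels := (chain_mem h.right r.minLeaf_mem hc).1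
              rw [ebar_node_right h hcl,
                if_neg (fun hx => absurd hlt (not_lt.2 (le_of_lt hx.2)))]
              exact hcr
            · rw [if_neg hlt] at hc
              exact absurd hc List.not_mem_nil
      · rw [chain_node_right h hmr, List.mem_append] at hc
        rw [ebar_node_right h hmr] at ht
        by_cases hc2 : m = r.minLeaf ∧ l.minLeaf < r.minLeaf
        · rw [if_pos hc2] at ht
          rcases hc with hc | hc
          · have : c = m := by
              rw [hc2.1, chain_minLeaf h.right, ← hc2.1] at hc
              simpa using hc
            subst this
            rw [ebar_node_right h hmr, if_pos hc2]
            exact ht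
          · rw [if_pos hc2.2] at hc
            have htl : t ∈ l.ebar l.minLeaf := by
              rw [ebar_min h.left]
              exact le_trans (le_of_lt (lt_of_lt_of_le hc2.2 (le_of_eq hc2.1.symm))) ht.1
            have hcr := chain_alive h.left l.minLeaf_mem htl hc
            have hcl : c ∈ l.leafLabels := (chain_mem h.left l.minLeaf_mem hc).1
            rw [ebar_node_left hcl,
              if_neg (fun hx => absurd hc2.2 (not_lt.2 (le_of_lt hx.2)))]
            exact hcr
        · rw [if_neg hc2] at ht
          rcases hc with hc | hc
          · have hcl : c ∈ r.leafLabels := (chain_mem h.right hmr hc).1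
            have hcal := chain_alive h.right hmr ht hc
            rw [ebar_node_right h hcl]
            by_cases hc3 : c = r.minLeaf ∧ l.minLeaf < r.minLeaf
            · rw [if_pos hc3]
              have hmne : m ≠ r.minLeaf := by
                intro hx
                exact hc2 ⟨hx, hc3.2⟩
              have hta : t < a :=
                lt_trans (Set.mem_Iio.1 (ebar_bounded h.right hmr hmne ht)) h.2.2.1
              exact ⟨ebar_subset_Ici h.right hcl hcal, hta⟩
            · rw [if_neg hc3]
              exact hcal
          · by_cases hlt : l.minLeaf < r.minLeaf
            · rw [if_pos hlt] at hc
              have hmt : m ≤ t := ebar_subset_Ici h.right hmr ht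
              have htl : t ∈ l.ebar l.minLeaf := by
                rw [ebar_min h.left]
                exact le_trans (le_of_lt (lt_of_lt_of_le hlt (minLeaf_le hmr))) hmt
              have hcr := chain_alive h.left l.minLeaf_mem htl hc
              have hcl : c ∈ l.leafLabels := (chain_mem h.left l.minLeaf_mem hc).1
              rw [ebar_node_left hcl,
                if_neg (fun hx => absurd hlt (not_lt.2 (le_of_lt hx.2)))]
              exact hcr
            · rw [if_neg hlt] at hc
              exact absurd hc List.not_mem_nil

end CMT
namespace CMT

theorem chain_suffix : ∀ {T : CMT} {m t : ℝ}, T.Valid → m ∈ T.leafLabels → m ≤ t →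
    T.chain ((T.subAt (T.waddr t m)).minLeaf) <:+ T.chain m
  | leaf a, m, t, _, hm, hmt => by
      have hma : m = a := Set.mem_singleton_iff.1 hm
      subst hma
      rw [waddr, subAt_nil]
      exact List.suffix_rfl
  | node a l r, m, t, h, hm, hmt => by
      by_cases ha : a ≤ t
      · have hww : (node a l r).waddr t m = [] := by rw [waddr, if_pos ha]
        rw [hww, subAt_nil, chain_minLeaf h]
        exact chain_min_suffix h hm
      · rcases (hm : m ∈ l.leafLabels ∪ r.leafLabels) with hml | hmr
        · have hww : (node a l r).waddr t m = false :: l.waddr t m := by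
            rw [waddr, if_neg ha, if_pos hml]
          rw [hww]
          simp only [subAt]
          have hm0 : (l.subAt (l.waddr t m)).minLeaf ∈ l.leafLabels :=
            leafLabels_subAt l _ (minLeaf_mem _)
          rw [chain_node_left hm0, chain_node_left hml]
          exact suffix_append_both (chain_suffix h.left hml hmt)
        · have hww : (node a l r).waddr t m = true :: r.waddr t m := by
            rw [waddr, if_neg ha, if_neg (fun hx => h.not_mem_right hx hmr)]
          rw [hww]
          simp only [subAt]
          have hm0 : (r.subAt (r.waddr t m)).minLeaf ∈ r.leafLabels :=
            leafLabels_subAt r _ (minLeaf_mem _)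
          rw [chain_node_right h hm0, chain_node_right h hmr]
          exact suffix_append_both (chain_suffix h.right hmr hmt)

theorem chain_dead : ∀ {T : CMT} {m t c : ℝ}, T.Valid → m ∈ T.leafLabels → m ≤ t →
    c ∈ T.chain m → c ∉ T.chain ((T.subAt (T.waddr t m)).minLeaf) → t ∉ T.ebar c
  | leaf a, m, t, c, _, hm, hmt, hc, hnc => by
      have hma : m = a := Set.mem_singleton_iff.1 hm
      subst hma
      rw [waddr, subAt_nil] at hnc
      exact absurd hc hnc
  | node a l r, m, t, c, h, hm, hmt, hc, hnc => by
      by_cases ha : a ≤ t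
      · have hww : (node a l r).waddr t m = [] := by rw [waddr, if_pos ha]
        rw [hww, subAt_nil, chain_minLeaf h] at hnc
        have hcne : c ≠ (node a l r).minLeaf := fun hx => hnc (by rw [hx]; simp)
        have hcm : c ∈ (node a l r).leafLabels := (chain_mem h hm hc).1
        intro hmem
        exact absurd (ebar_bounded h hcm hcne hmem) (not_lt.2 ha)
      · rcases (hm : m ∈ l.leafLabels ∪ r.leafLabels) with hml | hmr
        · have hww : (node a l r).waddr t m = false :: l.waddr t m := by
            rw [waddr, if_neg ha, if_pos hml]
          rw [hww] at hnc
          simp only [subAt] at hnc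
          have hm0 : (l.subAt (l.waddr t m)).minLeaf ∈ l.leafLabels :=
            leafLabels_subAt l _ (minLeaf_mem _)
          rw [chain_node_left hm0] at hnc
          rw [chain_node_left hml, List.mem_append] at hc
          rcases hc with hc | hc
          · have hncl : c ∉ l.chain (l.subAt (l.waddr t m)).minLeaf := fun hx =>
              hnc (List.mem_append_left _ hx)
            have hdead := chain_dead h.left hml hmt hc hncl
            have hcl : c ∈ l.leafLabels := (chain_mem h.left hml hc).1
            rw [ebar_node_left hcl]
            by_cases hc3 : c = l.minLeaf ∧ r.minLeaf < l.minLeaf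
            · rw [if_pos hc3]
              intro hmem
              have hIci : l.ebar c = Set.Ici c := by
                rw [hc3.1]
                exact ebar_min h.left
              rw [hIci] at hdead
              exact hdead (Set.mem_Ici.2 hmem.1)
            · rw [if_neg hc3]
              exact hdead
          · exact absurd (List.mem_append_right _ hc) hnc
        · have hww : (node a l r).waddr t m = true :: r.waddr t m := by
            rw [waddr, if_neg ha, if_neg (fun hx => h.not_mem_right hx hmr)]
          rw [hww] at hnc
          simp only [subAt] at hnc
          have hm0 : (r.subAt (r.waddr t m)).minLeaf ∈ r.leafLabels :=
            leafLabels_subAt r _ (minLeaf_mem _)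
          rw [chain_node_right h hm0] at hnc
          rw [chain_node_right h hmr, List.mem_append] at hc
          rcases hc with hc | hc
          · have hncl : c ∉ r.chain (r.subAt (r.waddr t m)).minLeaf := fun hx =>
              hnc (List.mem_append_left _ hx)
            have hdead := chain_dead h.right hmr hmt hc hncl
            have hcl : c ∈ r.leafLabels := (chain_mem h.right hmr hc).1
            rw [ebar_node_right h hcl]
            by_cases hc3 : c = r.minLeaf ∧ l.minLeaf < r.minLeaf
            · rw [if_pos hc3]
              intro hmem
              have hIci : r.ebar c = Set.Ici c := by
                rw [hc3.1]
                exact ebar_min h.right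
              rw [hIci] at hdead
              exact hdead (Set.mem_Ici.2 hmem.1)
            · rw [if_neg hc3]
              exact hdead
          · exact absurd (List.mem_append_right _ hc) hnc

end CMT
section Linear

open CMT

variable (k : Type) [Field k] (T : CMT)

/-- The basis vector of `S_T(t)` attached to the leaf `m`. -/
noncomputable def sing (t m : ℝ) : {w : List Bool // T.MemS t w} →₀ k :=
  if h : T.MemS t (T.waddr t m) then Finsupp.single ⟨T.waddr t m, h⟩ 1 else 0

/-- The bar of the leaf `c`, as an element of the Elder barcode. -/
noncomputable def barE (hT : T.Valid) (c : ℝ) : ↥T.Elder :=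
  if h : T.ebar c ∈ T.Elder then ⟨T.ebar c, h⟩
  else ⟨(elder_nonempty hT).choose, (elder_nonempty hT).choose_spec⟩

theorem barE_eq (hT : T.Valid) {c : ℝ} (hc : c ∈ T.leafLabels) :
    (barE T hT c : Set ℝ) = T.ebar c := by
  rw [barE, dif_pos (ebar_mem_elder hT hc)]

/-- The generator of the interval module of the bar `I`. -/
noncomputable def gen (t : ℝ) (I : ↥T.Elder) :
    ⨁ J : T.Elder, (PLift (t ∈ (J : Set ℝ)) → k) :=
  DirectSum.lof k ↥T.Elder (fun J => PLift (t ∈ (J : Set ℝ)) → k) I (fun _ => 1)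

/-- Image of the basis vector of the component of the leaf `m` under the
structural isomorphism. -/
noncomputable def Phi (hT : T.Valid) (t m : ℝ) :
    ⨁ J : T.Elder, (PLift (t ∈ (J : Set ℝ)) → k) :=
  ((T.chain m).map (fun c => gen k T t (barE T hT c))).sum

/-- The structural map from the free persistent module to the barcode module. -/
noncomputable def phi (hT : T.Valid) (t : ℝ) :
    ({w : List Bool // T.MemS t w} →₀ k) →ₗ[k]
      ⨁ J : T.Elder, (PLift (t ∈ (J : Set ℝ)) → k) :=
  Finsupp.linearCombination k (fun w : {w : List Bool // T.MemS t w} =>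
    Phi k T hT t (T.subAt w.1).minLeaf)

/-- The generator of the summand attached to the bar of the leaf `m`. -/
noncomputable def avec (hT : T.Valid) (t m : ℝ) : {w : List Bool // T.MemS t w} →₀ k :=
  sing k T t m - (if m = T.minLeaf then 0 else sing k T t ((T.chain m).tail.headI))

noncomputable def psiAux (hT : T.Valid) (t : ℝ) (I : ↥T.Elder) :
    (PLift (t ∈ (I : Set ℝ)) → k) →ₗ[k] ({w : List Bool // T.MemS t w} →₀ k) where
  toFun x := if h : t ∈ (I : Set ℝ) then x ⟨h⟩ • avec k T hT t (sInf (I : Set ℝ)) else 0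
  map_add' x y := by
    by_cases h : t ∈ (I : Set ℝ) <;> simp [h, add_smul]
  map_smul' c x := by
    by_cases h : t ∈ (I : Set ℝ) <;> simp [h, mul_smul]

/-- The inverse structural map. -/
noncomputable def psi (hT : T.Valid) (t : ℝ) :
    (⨁ J : T.Elder, (PLift (t ∈ (J : Set ℝ)) → k)) →ₗ[k]
      ({w : List Bool // T.MemS t w} →₀ k) :=
  DirectSum.toModule k ↥T.Elder _ (psiAux k T hT t)

variable {T}

theorem sing_eq (hT : T.Valid) {t m : ℝ} (hm : m ∈ T.leafLabels) (hmt : m ≤ t) :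
    sing k T t m = Finsupp.single ⟨T.waddr t m, memS_waddr hT hm hmt⟩ 1 := by
  rw [sing, dif_pos (memS_waddr hT hm hmt)]

theorem chain_head_tail (hT : T.Valid) {m : ℝ} (hm : m ∈ T.leafLabels)
    (hne : m ≠ T.minLeaf) :
    (T.chain m).tail.headI ∈ T.leafLabels ∧ (T.chain m).tail.headI < m ∧
      T.chain m = m :: T.chain ((T.chain m).tail.headI) := by
  obtain ⟨m', hm'1, hm'2, hm'3⟩ := chain_tail hT hm hne
  obtain ⟨tl, htl⟩ := chain_cons_exists hT hm
  obtain ⟨tl', htl'⟩ := chain_cons_exists hT hm'1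
  have hhead : (T.chain m).tail.headI = m' := by rw [hm'3, htl']; rfl
  refine ⟨hhead ▸ hm'1, hhead ▸ hm'2, ?_⟩
  rw [hhead, ← hm'3, htl]
  rfl

theorem psi_gen_alive (hT : T.Valid) {t c : ℝ} (hc : c ∈ T.leafLabels)
    (ht : t ∈ T.ebar c) :
    psi k T hT t (gen k T t (barE T hT c)) = avec k T hT t c := by
  rw [psi, gen, DirectSum.toModule_lof]
  have htI : t ∈ (barE T hT c : Set ℝ) := by rw [barE_eq T hT hc]; exact ht
  show (if h : t ∈ (barE T hT c : Set ℝ) then _ else 0) = _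
  rw [dif_pos htI, one_smul]
  congr 1
  rw [barE_eq T hT hc, sInf_ebar hT hc]

theorem tel (hT : T.Valid) : ∀ (n : ℕ) {m t : ℝ}, (T.chain m).length ≤ n →
    m ∈ T.leafLabels → t ∈ T.ebar m →
    ((T.chain m).map (fun c => avec k T hT t c)).sum = sing k T t m := by
  intro n
  induction n with
  | zero =>
      intro m t hlen hm ht
      obtain ⟨tl, htl⟩ := chain_cons_exists hT hm
      rw [htl] at hlen
      simp at hlen
  | succ n ih =>
      intro m t hlen hm ht
      by_cases hne : m = T.minLeaf
      · subst hne
        rw [chain_minLeaf hT, List.map_singleton, List.sum_singleton, avec,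
          if_pos rfl, sub_zero]
      · obtain ⟨hh1, hh2, hcons⟩ := chain_head_tail hT hm hne
        have hm'al : t ∈ T.ebar ((T.chain m).tail.headI) :=
          chain_alive hT hm ht (by
            rw [hcons]
            exact List.mem_cons_of_mem _ (by
              obtain ⟨tl', htl'⟩ := chain_cons_exists hT hh1
              rw [htl']
              exact List.mem_cons_self))
        have hlen' : (T.chain ((T.chain m).tail.headI)).length ≤ n := by
          rw [hcons] at hlen
          simpa using hlen
        rw [hcons, List.map_cons, List.sum_cons, ih hlen' hh1 hm'al, avec,
          if_neg hne, sub_add_cancel]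

theorem memS_pack (hT : T.Valid) {t : ℝ} {w : List Bool} (hw : T.MemS t w) :
    (T.subAt w).minLeaf ∈ T.leafLabels ∧ (T.subAt w).minLeaf ≤ t ∧
      w = T.waddr t (T.subAt w).minLeaf ∧ t ∈ T.ebar (T.subAt w).minLeaf := by
  have hm : (T.subAt w).minLeaf ∈ T.leafLabels := leafLabels_subAt T w (minLeaf_mem _)
  have hmt : (T.subAt w).minLeaf ≤ t :=
    le_trans (minLeaf_le_label (localValid_subAt w hT.2)) (memS_label_le hw)
  have hEq := memS_eq_waddr hT hw
  have halive : t ∈ T.ebar (T.subAt w).minLeaf := by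
    refine (alive_iff hT hm hmt).1 ?_
    rw [← hEq]
  exact ⟨hm, hmt, hEq, halive⟩

theorem psi_phi_single (hT : T.Valid) {t : ℝ} {w : List Bool} (hw : T.MemS t w) :
    psi k T hT t (phi k T hT t (Finsupp.single ⟨w, hw⟩ 1))
      = Finsupp.single ⟨w, hw⟩ 1 := by
  obtain ⟨hm, hmt, hEq, halive⟩ := memS_pack hT hw
  rw [phi, Finsupp.linearCombination_single, one_smul, Phi, map_list_sum,
    List.map_map]
  have hmapeq : (T.chain (T.subAt w).minLeaf).map
        (psi k T hT t ∘ fun c => gen k T t (barE T hT c))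
      = (T.chain (T.subAt w).minLeaf).map (fun c => avec k T hT t c) := by
    apply List.map_congr_left
    intro c hcmem
    have hc := chain_mem hT hm hcmem
    exact psi_gen_alive k hT hc.1 (chain_alive hT hm halive hcmem)
  rw [hmapeq, tel k hT (T.chain (T.subAt w).minLeaf).length le_rfl hm halive,
    sing_eq k hT hm hmt]
  congr 1
  exact Subtype.ext hEq.symm

end Linear
section Linear2

open CMT

variable (k : Type) [Field k] {T : CMT}

theorem phi_sing (hT : T.Valid) {t c : ℝ} (hc : c ∈ T.leafLabels) (hct : c ≤ t)
    (ht : t ∈ T.ebar c) :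
    phi k T hT t (sing k T t c) = Phi k T hT t c := by
  rw [sing_eq k hT hc hct, phi, Finsupp.linearCombination_single, one_smul]
  congr 1
  exact (alive_iff hT hc hct).2 ht

theorem phi_avec (hT : T.Valid) {t c : ℝ} (hc : c ∈ T.leafLabels) (hct : c ≤ t)
    (ht : t ∈ T.ebar c) :
    phi k T hT t (avec k T hT t c) = gen k T t (barE T hT c) := by
  by_cases hne : c = T.minLeaf
  · rw [avec, if_pos hne, sub_zero, phi_sing k hT hc hct ht, Phi]
    subst hne
    rw [chain_minLeaf hT, List.map_singleton, List.sum_singleton]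
  · obtain ⟨m', hm'1, hm'2, hm'3⟩ := chain_tail hT hc hne
    obtain ⟨tl', htl'⟩ := chain_cons_exists hT hm'1
    have hhead : (T.chain c).tail.headI = m' := by rw [hm'3, htl']; rfl
    obtain ⟨tl, htl⟩ := chain_cons_exists hT hc
    have hcons : T.chain c = c :: T.chain m' := by rw [← hm'3, htl]; rfl
    have hm't : m' ≤ t := le_trans (le_of_lt hm'2) hct
    have hm'al : t ∈ T.ebar m' :=
      chain_alive hT hc ht (by
        rw [hcons]
        exact List.mem_cons_of_mem _ (by
          rw [htl']
          exact List.mem_cons_self))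
    rw [avec, if_neg hne, hhead, map_sub, phi_sing k hT hc hct ht,
      phi_sing k hT hm'1 hm't hm'al]
    have hPhi : Phi k T hT t c = gen k T t (barE T hT c) + Phi k T hT t m' := by
      rw [Phi, hcons, List.map_cons, List.sum_cons]
      rfl
    rw [hPhi, add_sub_cancel_right]

theorem phi_psi_lof (hT : T.Valid) (t : ℝ) (I : ↥T.Elder)
    (x : PLift (t ∈ (I : Set ℝ)) → k) :
    phi k T hT t (psi k T hT t
        (DirectSum.lof k ↥T.Elder (fun J => PLift (t ∈ (J : Set ℝ)) → k) I x))
      = DirectSum.lof k ↥T.Elder (fun J => PLift (t ∈ (J : Set ℝ)) → k) I x := by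
  have hIm : (I : Set ℝ) ∈ T.ebar '' T.leafLabels := by
    rw [← elder_eq hT]
    exact I.2
  obtain ⟨c, hc, hce⟩ := hIm
  rw [psi, DirectSum.toModule_lof]
  by_cases h : t ∈ (I : Set ℝ)
  · have hsinf : sInf (I : Set ℝ) = c := by rw [← hce, sInf_ebar hT hc]
    show phi k T hT t
        (if h' : t ∈ (I : Set ℝ) then x ⟨h'⟩ • avec k T hT t (sInf (I : Set ℝ)) else 0)
      = _
    rw [dif_pos h, hsinf, map_smul]
    have htc : t ∈ T.ebar c := by rw [hce]; exact h
    have hct : c ≤ t := ebar_subset_Ici hT hc htc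
    rw [phi_avec k hT hc hct htc]
    have hbe : barE T hT c = I := Subtype.ext (by rw [barE_eq T hT hc, hce])
    rw [hbe, gen, ← map_smul]
    congr 1
    funext p
    show x ⟨h⟩ * 1 = x p
    rw [mul_one]
  · have hx : x = 0 := funext (fun p => absurd p.down h)
    subst hx
    show phi k T hT t ((psiAux k T hT t I) 0) = _
    simp

theorem comp_gen (hT : T.Valid) (t : ℝ) (I : ↥T.Elder) {c : ℝ}
    (hc : c ∈ T.leafLabels) :
    DirectSum.component k ↥T.Elder (fun J => PLift (t ∈ (J : Set ℝ)) → k) I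
        (gen k T t (barE T hT c))
      = if c = sInf (I : Set ℝ)
        then (fun _ : PLift (t ∈ (I : Set ℝ)) => (1 : k))
        else (0 : PLift (t ∈ (I : Set ℝ)) → k) := by
  rw [gen, DirectSum.component.of]
  by_cases hbc : barE T hT c = I
  · have hcs : c = sInf (I : Set ℝ) := by
      rw [← hbc, barE_eq T hT hc, sInf_ebar hT hc]
    rw [dif_pos hbc, if_pos hcs]
    subst hbc
    rfl
  · have hne' : ¬(c = sInf (I : Set ℝ)) := by
      intro hcs
      apply hbc
      have hIm : (I : Set ℝ) ∈ T.ebar '' T.leafLabels := by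
        rw [← elder_eq hT]
        exact I.2
      obtain ⟨c', hc', hce⟩ := hIm
      have hcc : c = c' := by rw [hcs, ← hce, sInf_ebar hT hc']
      exact Subtype.ext (by rw [barE_eq T hT hc, hcc, hce])
    rw [dif_neg hbc, if_neg hne']

theorem list_sum_if {M : Type} [AddCommMonoid M] : ∀ (l : List ℝ), l.Nodup →
    ∀ (b : ℝ) (v : M),
    (l.map (fun c => if c = b then v else 0)).sum = if b ∈ l then v else 0
  | [], _, b, v => by simp
  | a :: l, hnd, b, v => by
      rw [List.map_cons, List.sum_cons, list_sum_if l (List.nodup_cons.1 hnd).2 b v]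
      by_cases hab : a = b
      · subst hab
        rw [if_pos rfl, if_pos (List.mem_cons_self),
          if_neg (List.nodup_cons.1 hnd).1, add_zero]
      · rw [if_neg hab, zero_add]
        by_cases hbl : b ∈ l
        · rw [if_pos hbl, if_pos (List.mem_cons_of_mem _ hbl)]
        · rw [if_neg hbl, if_neg (fun hx => by
            rcases List.mem_cons.1 hx with h1 | h2
            · exact hab h1.symm
            · exact hbl h2)]

theorem comp_Phi (hT : T.Valid) {m : ℝ} (hm : m ∈ T.leafLabels) (t : ℝ)
    (I : ↥T.Elder) :
    DirectSum.component k ↥T.Elder (fun J => PLift (t ∈ (J : Set ℝ)) → k) I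
        (Phi k T hT t m)
      = if sInf (I : Set ℝ) ∈ T.chain m
        then (fun _ : PLift (t ∈ (I : Set ℝ)) => (1 : k))
        else (0 : PLift (t ∈ (I : Set ℝ)) → k) := by
  rw [Phi, map_list_sum, List.map_map]
  have hcong : (T.chain m).map
        ((DirectSum.component k ↥T.Elder (fun J => PLift (t ∈ (J : Set ℝ)) → k) I)
          ∘ fun c => gen k T t (barE T hT c))
      = (T.chain m).map
          (fun c => if c = sInf (I : Set ℝ)
            then (fun _ : PLift (t ∈ (I : Set ℝ)) => (1 : k))
            else (0 : PLift (t ∈ (I : Set ℝ)) → k)) :=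
    List.map_congr_left (fun c hcm => comp_gen k hT t I (chain_mem hT hm hcm).1)
  rw [hcong, list_sum_if _ (chain_nodup hT hm)]

theorem intervalShift_apply (I : Set ℝ) (r t : ℝ) (x : PLift (r ∈ I) → k)
    (p : PLift (t ∈ I)) :
    intervalShift k I r t x p = if hr : r ∈ I then x ⟨hr⟩ else 0 := rfl

theorem nat_core (hT : T.Valid) {r t : ℝ} (hrt : r ≤ t) {m : ℝ}
    (hm : m ∈ T.leafLabels) (hmr : m ≤ r) (hal : r ∈ T.ebar m) (I : ↥T.Elder) :
    (if sInf (I : Set ℝ) ∈ T.chain ((T.subAt (T.waddr t m)).minLeaf)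
        then (fun _ : PLift (t ∈ (I : Set ℝ)) => (1 : k))
        else (0 : PLift (t ∈ (I : Set ℝ)) → k))
      = intervalShift k (I : Set ℝ) r t
          (if sInf (I : Set ℝ) ∈ T.chain m
            then (fun _ : PLift (r ∈ (I : Set ℝ)) => (1 : k))
            else (0 : PLift (r ∈ (I : Set ℝ)) → k)) := by
  have hIm : (I : Set ℝ) ∈ T.ebar '' T.leafLabels := by
    rw [← elder_eq hT]
    exact I.2
  obtain ⟨b', hb', hbe⟩ := hIm
  have hsinf : sInf (I : Set ℝ) = b' := by rw [← hbe, sInf_ebar hT hb']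
  have hmt : m ≤ t := le_trans hmr hrt
  have hm0mem : (T.subAt (T.waddr t m)).minLeaf ∈ T.leafLabels :=
    leafLabels_subAt T _ (minLeaf_mem _)
  have hm0le : (T.subAt (T.waddr t m)).minLeaf ≤ m :=
    minLeaf_le (mem_leafLabels_subAt_waddr hT hm hmt)
  funext p
  have htI : t ∈ T.ebar b' := by rw [hbe]; exact p.down
  rw [hsinf, intervalShift_apply]
  by_cases hin : b' ∈ T.chain ((T.subAt (T.waddr t m)).minLeaf)
  · have hbr : b' ≤ r := le_trans (le_trans (chain_mem hT hm0mem hin).2 hm0le) hmr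
    have hrI : r ∈ (I : Set ℝ) := by
      rw [← hbe]
      exact mem_ebar_of hT hb' hbr hrt htI
    rw [if_pos hin, dif_pos hrI, if_pos ((chain_suffix hT hm hmt).subset hin)]
  · rw [if_neg hin]
    by_cases hrI : r ∈ (I : Set ℝ)
    · rw [dif_pos hrI]
      by_cases hbm : b' ∈ T.chain m
      · exact absurd htI (chain_dead hT hm hmt hbm hin)
      · rw [if_neg hbm]
        rfl
    · rw [dif_neg hrI]
      rfl

/-- The Elder isomorphism at time `t`. -/
noncomputable def eT (hT : T.Valid) (t : ℝ) :
    ({w : List Bool // T.MemS t w} →₀ k) ≃ₗ[k]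
      ⨁ J : T.Elder, (PLift (t ∈ (J : Set ℝ)) → k) :=
  LinearEquiv.ofLinear (phi k T hT t) (psi k T hT t)
    (by
      apply DirectSum.linearMap_ext
      intro I
      apply LinearMap.ext
      intro x
      exact phi_psi_lof k hT t I x)
    (by
      apply Finsupp.lhom_ext
      intro a b
      have hsm : Finsupp.single a b = b • Finsupp.single a (1 : k) := by
        rw [Finsupp.smul_single', mul_one]
      show psi k T hT t (phi k T hT t (Finsupp.single a b)) = Finsupp.single a b
      rw [hsm, map_smul, map_smul, psi_phi_single k hT a.2])

end Linear2

/-- the Elder Rule: for a valid chiral merge tree `T`, the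
persistent vector space freely generated by the persistent set `S_T` is naturally
isomorphic to the direct sum of the interval modules of the bars of `Elder T`.
Here `σ` is the shift map of `S_T`, sending each node to its unique ancestor
(prefix address) in `S_T(t)`. -/
theorem elder_rule (k : Type) [Field k] (T : CMT) (hT : T.Valid)
    (σ : ∀ r t : ℝ, r ≤ t → {w : List Bool // T.MemS r w} → {w : List Bool // T.MemS t w})
    (hσ : ∀ (r t : ℝ) (h : r ≤ t) (v : {w : List Bool // T.MemS r w}),
      (σ r t h v).1 <+: v.1) :
    ∃ e : (t : ℝ) → ({w : List Bool // T.MemS t w} →₀ k) ≃ₗ[k]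
        (⨁ I : T.Elder, (PLift (t ∈ (I : Set ℝ)) → k)),
      ∀ (r t : ℝ) (h : r ≤ t) (x : {w : List Bool // T.MemS r w} →₀ k) (I : T.Elder),
        (e t (Finsupp.mapDomain (σ r t h) x)) I
          = intervalShift k (I : Set ℝ) r t ((e r x) I) := by
  refine ⟨fun t => eT k hT t, ?_⟩
  intro r t h x I
  show DirectSum.component k ↥T.Elder (fun J => PLift (t ∈ (J : Set ℝ)) → k) I
        (phi k T hT t (Finsupp.mapDomain (σ r t h) x))
      = intervalShift k (I : Set ℝ) r t
          (DirectSum.component k ↥T.Elder (fun J => PLift (r ∈ (J : Set ℝ)) → k) I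
            (phi k T hT r x))
  have key : ∀ w : {w : List Bool // T.MemS r w},
      DirectSum.component k ↥T.Elder (fun J => PLift (t ∈ (J : Set ℝ)) → k) I
          (phi k T hT t (Finsupp.mapDomain (σ r t h) (Finsupp.single w 1)))
        = intervalShift k (I : Set ℝ) r t
            (DirectSum.component k ↥T.Elder (fun J => PLift (r ∈ (J : Set ℝ)) → k) I
              (phi k T hT r (Finsupp.single w 1))) := by
    intro w
    obtain ⟨hm, hmr, hEq, halive⟩ := memS_pack hT w.2
    have hσeq : (σ r t h w).1 = T.waddr t (T.subAt w.1).minLeaf :=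
      CMT.memS_prefix_eq hT (σ r t h w).2 w.2 (hσ r t h w) h
    have hL : phi k T hT t (Finsupp.single (σ r t h w) 1)
        = Phi k T hT t (T.subAt (σ r t h w).1).minLeaf := by
      rw [phi, Finsupp.linearCombination_single, one_smul]
    have hR : phi k T hT r (Finsupp.single w 1)
        = Phi k T hT r (T.subAt w.1).minLeaf := by
      rw [phi, Finsupp.linearCombination_single, one_smul]
    have hm0mem : (T.subAt (T.waddr t (T.subAt w.1).minLeaf)).minLeaf
        ∈ T.leafLabels := CMT.leafLabels_subAt T _ (CMT.minLeaf_mem _)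
    rw [Finsupp.mapDomain_single, hL, hR, hσeq, comp_Phi k hT hm0mem t I,
      comp_Phi k hT hm r I]
    exact nat_core k hT h hm hmr halive I
  induction x using Finsupp.induction_linear with
  | zero => simp
  | add f g hf hg => simp [Finsupp.mapDomain_add, map_add, hf, hg]
  | single a b =>
      have hsm : Finsupp.single a b = b • Finsupp.single a (1 : k) := by
        rw [Finsupp.smul_single', mul_one]
      rw [hsm, Finsupp.mapDomain_smul, map_smul, map_smul, map_smul, map_smul,
        map_smul, key a]
end

section
/- Let f and g be Morse-like functions on [0,1] such that 0 and 1 are local minimum points of both f and g. If f and g both realize the same valid chiral merge tree T, then f and g are graph-equivalent. -/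
open scoped Classical

namespace MyAux
open CMT

lemma subtree?_append (T : CMT) (u v : List Bool) :
    T.subtree? (u ++ v) = (T.subtree? u).bind (fun s => s.subtree? v) := by
  induction u generalizing T with
  | nil => simp [CMT.subtree?]
  | cons b u ih =>
    cases T with
    | leaf a => cases b <;> simp [CMT.subtree?]
    | node a l r => cases b <;> simp [CMT.subtree?, ih]

lemma subtree_label_lt : ∀ (w : List Bool) (T : CMT), T.LocalValid →
    ∀ s, T.subtree? w = some s → w ≠ [] → s.label < T.label := by
  intro w
  induction w with
  | nil => intro T _ s _ h; exact absurd rfl h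
  | cons b w ih =>
    intro T hT s hs _
    cases T with
    | leaf a => cases b <;> simp [CMT.subtree?] at hs
    | node a l r =>
      obtain ⟨hl, hr, hvl, hvr⟩ := hT
      cases b with
      | false =>
        simp only [CMT.subtree?] at hs
        rcases eq_or_ne w [] with rfl | hw
        · simp [CMT.subtree?] at hs; subst hs; exact hl
        · exact (ih l hvl s hs hw).trans hl
      | true =>
        simp only [CMT.subtree?] at hs
        rcases eq_or_ne w [] with rfl | hw
        · simp [CMT.subtree?] at hs; subst hs; exact hr
        · exact (ih r hvr s hs hw).trans hr

lemma localValid_subtree : ∀ (w : List Bool) (T : CMT), T.LocalValid →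
    ∀ s, T.subtree? w = some s → s.LocalValid := by
  intro w
  induction w with
  | nil => intro T hT s hs; simp [CMT.subtree?] at hs; subst hs; exact hT
  | cons b w ih =>
    intro T hT s hs
    cases T with
    | leaf a => cases b <;> simp [CMT.subtree?] at hs
    | node a l r =>
      obtain ⟨hl, hr, hvl, hvr⟩ := hT
      cases b with
      | false => exact ih l hvl s hs
      | true => exact ih r hvr s hs

lemma ancestor_label_lt {T : CMT} (hT : T.LocalValid) {u w : List Bool} (h : u <+: w)
    (hne : u ≠ w) {s : CMT} (hs : T.subtree? w = some s) :
    ∃ s', T.subtree? u = some s' ∧ s.label < s'.label := by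
  obtain ⟨v, rfl⟩ := h
  have hv : v ≠ [] := by rintro rfl; simp at hne
  rw [subtree?_append] at hs
  rcases hu : T.subtree? u with _ | s'
  · rw [hu] at hs; simp at hs
  · rw [hu] at hs; simp at hs
    exact ⟨s', rfl, subtree_label_lt v s' (localValid_subtree u T hT s' hu) s hs hv⟩

lemma memS_prefix_eq_aux {T : CMT} (hT : T.LocalValid) {t : ℝ} {u u' w : List Bool}
    (hu : T.MemS t u) (hu' : T.MemS t u') (h1 : u <+: w) (h2 : u' <+: w)
    (hlen : u.length ≤ u'.length) : u = u' := by
  by_contra hne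
  have hpre : u <+: u' := List.prefix_of_prefix_length_le h1 h2 hlen
  have hlt : u.length < u'.length := by
    rcases lt_or_eq_of_le hlen with h | h
    · exact h
    · exact absurd (List.IsPrefix.eq_of_length hpre h) hne
  have hu'ne : u' ≠ [] := by
    rintro rfl; simp at hlt
  have hpre2 : u <+: u'.dropLast := by
    apply List.prefix_of_prefix_length_le hpre (List.dropLast_prefix u')
    rw [List.length_dropLast]; omega
  obtain ⟨a', ha', ha'le⟩ := hu'.1
  rcases hs' : T.subtree? u' with _ | s'
  · rw [CMT.nodeLabel?, hs'] at ha'; simp at ha'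
  have hdl : u'.dropLast <+: u' := List.dropLast_prefix u'
  obtain ⟨v, hvapp⟩ := hdl
  have hsp : ∃ sp, T.subtree? u'.dropLast = some sp := by
    have := subtree?_append T u'.dropLast v
    rw [hvapp, hs'] at this
    rcases h : T.subtree? u'.dropLast with _ | sp
    · rw [h] at this; simp at this
    · exact ⟨sp, rfl⟩
  obtain ⟨sp, hsp⟩ := hsp
  have htsp : t < sp.label := hu'.2 sp.label hu'ne (by rw [CMT.nodeLabel?, hsp]; rfl)
  obtain ⟨a, ha, hale⟩ := hu.1
  rcases hsu : T.subtree? u with _ | su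
  · rw [CMT.nodeLabel?, hsu] at ha; simp at ha
  have hasu : a = su.label := by rw [CMT.nodeLabel?, hsu] at ha; simpa using ha.symm
  rcases eq_or_ne u u'.dropLast with rfl | hne2
  · rw [hsu] at hsp
    injection hsp with h; subst h
    exact absurd (hasu ▸ hale) (not_le.mpr htsp)
  · obtain ⟨s'', hs'', hlab⟩ := ancestor_label_lt hT hpre2 hne2 hsp
    rw [hsu] at hs''; injection hs'' with h; subst h
    have : t < su.label := htsp.trans hlab
    exact absurd (hasu ▸ hale) (not_le.mpr this)

lemma memS_prefix_eq {T : CMT} (hT : T.LocalValid) {t : ℝ} {u u' w : List Bool}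
    (hu : T.MemS t u) (hu' : T.MemS t u') (h1 : u <+: w) (h2 : u' <+: w) : u = u' := by
  rcases le_total u.length u'.length with h | h
  · exact memS_prefix_eq_aux hT hu hu' h1 h2 h
  · exact (memS_prefix_eq_aux hT hu' hu h2 h1 h).symm

end MyAux
namespace MyAux
open Set

/-- Bundled structural data for a Morse-like function with end minima. -/
structure MD (f : ℝ → ℝ) (m : ℕ) (p : ℕ → ℝ) : Prop where
  cont : ContinuousOn f (Set.Icc 0 1)
  mpos : 0 < m
  meven : Even m
  p0 : p 0 = 0
  pm : p m = 1
  plt : ∀ i, i < m → p i < p (i + 1)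
  inc : ∀ i, i < m → Even i → StrictMonoOn f (Set.Icc (p i) (p (i + 1)))
  dec : ∀ i, i < m → ¬ Even i → StrictAntiOn f (Set.Icc (p i) (p (i + 1)))
  dist : ∀ i j, i ≤ m → j ≤ m → i ≠ j → f (p i) ≠ f (p j)

variable {f : ℝ → ℝ} {m : ℕ} {p : ℕ → ℝ}

lemma MD.ple (h : MD f m p) : ∀ i j, i ≤ j → j ≤ m → p i ≤ p j := by
  intro i j hij hjm
  induction j with
  | zero =>
    have : i = 0 := by omega
    subst this; exact le_rfl
  | succ k ih =>
    rcases Nat.lt_or_ge i (k+1) with hlt | hge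
    · exact (ih (by omega) (by omega)).trans (h.plt k (by omega)).le
    · have : i = k + 1 := by omega
      subst this; exact le_rfl

lemma MD.pltlt (h : MD f m p) : ∀ i j, i < j → j ≤ m → p i < p j := by
  intro i j hij hjm
  have := h.plt i (by omega)
  exact this.trans_le (h.ple (i+1) j (by omega) hjm)

lemma MD.pmem (h : MD f m p) {i : ℕ} (hi : i ≤ m) : p i ∈ Set.Icc (0:ℝ) 1 := by
  constructor
  · have := h.ple 0 i (by omega) hi; rw [h.p0] at this; exact this
  · have := h.ple i m hi le_rfl; rw [h.pm] at this; exact this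

lemma MD.cover (h : MD f m p) {x : ℝ} (hx : x ∈ Set.Icc (0:ℝ) 1) :
    ∃ i, i < m ∧ x ∈ Set.Icc (p i) (p (i + 1)) := by
  classical
  set P : ℕ → Prop := fun i => p i ≤ x with hP
  have hP0 : P 0 := by rw [hP]; simp [h.p0, hx.1]
  have hPk : P (Nat.findGreatest P m) := Nat.findGreatest_spec (Nat.zero_le m) hP0
  have hkm : Nat.findGreatest P m ≤ m := Nat.findGreatest_le m
  set k := Nat.findGreatest P m with hk
  rcases Nat.lt_or_ge k m with hlt | hge
  · refine ⟨k, hlt, hPk, ?_⟩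
    have hng : ¬ P (k+1) :=
      Nat.findGreatest_is_greatest (by rw [← hk]; omega) (by omega)
    simp only [hP] at hng
    exact (lt_of_not_ge hng).le
  · have hkm' : k = m := le_antisymm hkm hge
    have h1x : (1:ℝ) ≤ x := by rw [← h.pm, ← hkm']; exact hPk
    have hx1 : x = 1 := le_antisymm hx.2 h1x
    have hmpos := h.mpos
    refine ⟨m - 1, by omega, ?_, ?_⟩
    · rw [hx1]; have := h.pmem (i := m - 1) (by omega); exact this.2
    · have : m - 1 + 1 = m := by omega
      rw [this, h.pm, hx1]

/-- Extraction of structural data from `MorseLike` plus end minima. -/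
lemma morse_data (hf : MorseLike f)
    (h0 : IsLocalMinOn f (Set.Icc 0 1) 0) (h1 : IsLocalMinOn f (Set.Icc 0 1) 1) :
    ∃ m pp, MD f m pp := by
  obtain ⟨hcont, m, p, hp0, hpm, hplt, hdir, halt, hdist⟩ := hf
  have hmpos : 0 < m := by
    rcases Nat.eq_zero_or_pos m with rfl | h
    · rw [hp0] at hpm; norm_num at hpm
    · exact h
  have hple : ∀ i j, i ≤ j → j ≤ m → p i ≤ p j := by
    intro i j hij hjm
    induction j with
    | zero =>
      have : i = 0 := by omega
      subst this; exact le_rfl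
    | succ k ih =>
      rcases Nat.lt_or_ge i (k+1) with hlt | hge
      · exact (ih (by omega) (by omega)).trans (hplt k (by omega)).le
      · have : i = k + 1 := by omega
        subst this; exact le_rfl
  have hpmem : ∀ i, i ≤ m → p i ∈ Set.Icc (0:ℝ) 1 := by
    intro i hi
    constructor
    · have := hple 0 i (by omega) hi; rw [hp0] at this; exact this
    · have := hple i m hi le_rfl; rw [hpm] at this; exact this
  -- pieces can't be both mono and anti
  have hnotboth : ∀ i, i < m → StrictMonoOn f (Set.Icc (p i) (p (i+1))) →
      StrictAntiOn f (Set.Icc (p i) (p (i+1))) → False := by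
    intro i him hm ha
    have h01 : p i ∈ Set.Icc (p i) (p (i+1)) := ⟨le_rfl, (hplt i him).le⟩
    have h02 : p (i+1) ∈ Set.Icc (p i) (p (i+1)) := ⟨(hplt i him).le, le_rfl⟩
    have := hm h01 h02 (hplt i him)
    have := ha h01 h02 (hplt i him)
    linarith
  -- the first piece is increasing
  have hInc0 : StrictMonoOn f (Set.Icc (p 0) (p 1)) := by
    rcases hdir 0 hmpos with h | h
    · exact h
    · exfalso
      have hmem : {x | f 0 ≤ f x} ∈ nhdsWithin 0 (Set.Icc (0:ℝ) 1) := h0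
      rw [Metric.mem_nhdsWithin_iff] at hmem
      obtain ⟨ε, hε, hball⟩ := hmem
      set x := min (ε/2) (p 1) with hxdef
      have hp1pos : 0 < p 1 := by rw [← hp0]; exact hplt 0 hmpos
      have hxpos : 0 < x := lt_min (by linarith) hp1pos
      have hx1 : x ≤ 1 := le_trans (min_le_right _ _) (hpmem 1 hmpos).2
      have hxball : x ∈ Metric.ball (0:ℝ) ε := by
        simp only [Metric.mem_ball, Real.dist_eq, sub_zero]
        rw [abs_of_pos hxpos]
        exact lt_of_le_of_lt (min_le_left _ _) (by linarith)
      have hfle : f 0 ≤ f x := hball ⟨hxball, ⟨hxpos.le, hx1⟩⟩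
      have hxmem : x ∈ Set.Icc (p 0) (p 1) := ⟨by rw [hp0]; exact hxpos.le, min_le_right _ _⟩
      have h0mem : (0:ℝ) ∈ Set.Icc (p 0) (p 1) := ⟨by rw [hp0], hp1pos.le⟩
      have := h h0mem hxmem hxpos
      linarith
  -- the last piece is decreasing
  have hDecLast : ¬ StrictMonoOn f (Set.Icc (p (m-1)) (p m)) := by
    intro h
    have hmem : {x | f 1 ≤ f x} ∈ nhdsWithin 1 (Set.Icc (0:ℝ) 1) := h1
    rw [Metric.mem_nhdsWithin_iff] at hmem
    obtain ⟨ε, hε, hball⟩ := hmem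
    have hpm1 : p (m-1) < 1 := by
      rw [← hpm]
      have : m - 1 < m := by omega
      have := hplt (m-1) this
      rwa [Nat.sub_add_cancel (by omega)] at this
    set x := max (1 - ε/2) (p (m-1)) with hxdef
    have hxlt1 : x < 1 := max_lt (by linarith) hpm1
    have hx0 : 0 ≤ x := le_trans (hpmem (m-1) (by omega)).1 (le_max_right _ _)
    have hxball : x ∈ Metric.ball (1:ℝ) ε := by
      simp only [Metric.mem_ball, Real.dist_eq]
      rw [abs_of_nonpos (by linarith)]
      have : 1 - ε/2 ≤ x := le_max_left _ _
      linarith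
    have hfle : f 1 ≤ f x := hball ⟨hxball, ⟨hx0, hxlt1.le⟩⟩
    have hxmem : x ∈ Set.Icc (p (m-1)) (p m) := ⟨le_max_right _ _, by rw [hpm]; exact hxlt1.le⟩
    have h1mem : (1:ℝ) ∈ Set.Icc (p (m-1)) (p m) := ⟨hpm1.le, by rw [hpm]⟩
    have := h hxmem h1mem hxlt1
    linarith
  -- alternation: piece i is increasing iff i is even
  have hiff : ∀ i, i < m → (StrictMonoOn f (Set.Icc (p i) (p (i+1))) ↔ Even i) := by
    intro i
    induction i with
    | zero => intro _; simp [hInc0]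
    | succ k ih =>
      intro hk
      have hk' : k < m := by omega
      have halt' := halt k hk
      constructor
      · intro hmono
        by_contra hodd
        have hkeven : Even k := by
          rcases Nat.even_or_odd k with h | h
          · exact h
          · exfalso; apply hodd; simpa [Nat.even_add_one] using h
        have : StrictAntiOn f (Set.Icc (p (k+1)) (p (k+2))) := halt'.mp ((ih hk').mpr hkeven)
        exact hnotboth (k+1) hk hmono this
      · intro heven
        have hkodd : ¬ Even k := by simpa [Nat.even_add_one] using heven
        rcases hdir (k+1) hk with h | h
        · exact h
        · exfalso
          have : ¬ StrictMonoOn f (Set.Icc (p k) (p (k+1))) := by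
            intro hm; exact hkodd ((ih hk').mp hm)
          rcases hdir k hk' with h2 | h2
          · exact this h2
          · -- piece k anti, piece k+1 anti: contradicts halt'
            have : StrictMonoOn f (Set.Icc (p k) (p (k+1))) := halt'.mpr h
            exact hkodd ((ih hk').mp this)
  have hmeven : Even m := by
    have hm1 : m - 1 < m := by omega
    have := hiff (m-1) hm1
    have hsub : m - 1 + 1 = m := by omega
    have hnotinc : ¬ StrictMonoOn f (Set.Icc (p (m-1)) (p (m-1+1))) := by
      rw [hsub]; exact hDecLast
    have hodd : ¬ Even (m-1) := fun he => hnotinc (this.mpr he)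
    rcases Nat.even_or_odd m with h | h
    · exact h
    · exfalso
      apply hodd
      rcases h with ⟨c, hc⟩
      exact ⟨c, by omega⟩
  refine ⟨m, p, hcont, hmpos, hmeven, hp0, hpm, hplt, ?_, ?_, hdist⟩
  · intro i him hie; exact (hiff i him).mpr hie
  · intro i him hio
    rcases hdir i him with h | h
    · exact absurd ((hiff i him).mp h) hio
    · exact h

end MyAux
namespace MyAux
open Set

lemma sublevel_subset_Icc (f : ℝ → ℝ) (t : ℝ) : sublevel f t ⊆ Set.Icc 0 1 :=
  fun _ hx => hx.1

lemma comp_ordConnected {A : Set ℝ} {x : ℝ} : OrdConnected (connectedComponentIn A x) :=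
  isPreconnected_connectedComponentIn.ordConnected

lemma comp_mem_components {A : Set ℝ} {x : ℝ} (hx : x ∈ A) :
    connectedComponentIn A x ∈ Components A := ⟨x, hx, rfl⟩

lemma comp_nonempty {A C : Set ℝ} (hC : C ∈ Components A) : C.Nonempty := by
  obtain ⟨x, hx, rfl⟩ := hC
  exact ⟨x, mem_connectedComponentIn hx⟩

lemma comp_eq_of_mem {A C : Set ℝ} (hC : C ∈ Components A) {y : ℝ} (hy : y ∈ C) :
    C = connectedComponentIn A y := by
  obtain ⟨x, hx, rfl⟩ := hC
  exact connectedComponentIn_eq hy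

lemma comp_subset' {A C : Set ℝ} (hC : C ∈ Components A) : C ⊆ A := by
  obtain ⟨x, hx, rfl⟩ := hC
  exact connectedComponentIn_subset A x

/-- Points of a component are bounded by any "barrier" not in the set. -/
lemma comp_left_of_notmem {A : Set ℝ} {c : ℝ} (hc : c ∉ A) {x y : ℝ}
    (hy : y ∈ connectedComponentIn A x) (hxc : x < c) : y < c := by
  by_contra hcon
  push_neg at hcon
  have hxA : x ∈ A := connectedComponentIn_nonempty_iff.mp ⟨y, hy⟩
  have hcmem : c ∈ connectedComponentIn A x :=
    comp_ordConnected.out (mem_connectedComponentIn hxA) hy ⟨hxc.le, hcon⟩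
  exact hc (connectedComponentIn_subset A x hcmem)

variable {f : ℝ → ℝ} {m : ℕ} {p : ℕ → ℝ}

/-- At level `f (p i)` for an even `i`, the component of `p i` is a singleton. -/
lemma MD.singleton_comp (h : MD f m p) {i : ℕ} (hi : i ≤ m) (hie : Even i) :
    connectedComponentIn (sublevel f (f (p i))) (p i) = {p i} := by
  set t := f (p i) with ht
  have hpiA : p i ∈ sublevel f t := ⟨h.pmem hi, le_rfl⟩
  apply Subset.antisymm
  · intro y hy
    by_contra hne
    simp only [mem_singleton_iff] at hne
    have hyA : y ∈ sublevel f t := connectedComponentIn_subset _ _ hy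
    rcases lt_or_gt_of_ne hne with hlt | hgt
    · -- y < p i : use decreasing piece i - 1
      have hi0 : 0 < i := by
        rcases Nat.eq_zero_or_pos i with rfl | hp
        · exfalso; rw [h.p0] at hlt; exact absurd hyA.1.1 (not_le.mpr hlt)
        · exact hp
      have him : i - 1 < m := by omega
      have hodd : ¬ Even (i - 1) := by
        rcases hie with ⟨c, hc⟩
        intro ⟨c', hc'⟩; omega
      have hdec := h.dec (i-1) him hodd
      have hsub : i - 1 + 1 = i := by omega
      rw [hsub] at hdec
      set z := max y (p (i-1)) with hz
      have hzlt : z < p i := max_lt hlt (h.plt (i-1) him |>.trans_eq (by rw [hsub]))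
      have hzmem : z ∈ Set.Icc (p (i-1)) (p i) := ⟨le_max_right _ _, hzlt.le⟩
      have hpimem : p i ∈ Set.Icc (p (i-1)) (p i) := ⟨(h.ple (i-1) i (by omega) hi), le_rfl⟩
      have hfz : t < f z := hdec hzmem hpimem hzlt
      have hzcomp : z ∈ connectedComponentIn (sublevel f t) (p i) :=
        comp_ordConnected.out hy (mem_connectedComponentIn hpiA) ⟨le_max_left _ _, hzlt.le⟩
      have : f z ≤ t := (connectedComponentIn_subset _ _ hzcomp).2
      linarith
    · -- p i < y : use increasing piece i
      have him : i < m := by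
        rcases Nat.lt_or_ge i m with hlt' | hge
        · exact hlt'
        · exfalso
          have : i = m := by omega
          subst this
          rw [h.pm] at hgt
          exact absurd hyA.1.2 (not_le.mpr hgt)
      have hinc := h.inc i him hie
      set z := min y (p (i+1)) with hz
      have hzgt : p i < z := lt_min hgt (h.plt i him)
      have hzmem : z ∈ Set.Icc (p i) (p (i+1)) := ⟨hzgt.le, min_le_right _ _⟩
      have hpimem : p i ∈ Set.Icc (p i) (p (i+1)) := ⟨le_rfl, (h.plt i him).le⟩
      have hfz : t < f z := hinc hpimem hzmem hzgt
      have hzcomp : z ∈ connectedComponentIn (sublevel f t) (p i) :=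
        comp_ordConnected.out (mem_connectedComponentIn hpiA) hy ⟨hzgt.le, min_le_left _ _⟩
      have : f z ≤ t := (connectedComponentIn_subset _ _ hzcomp).2
      linarith
  · intro y hy
    simp only [mem_singleton_iff] at hy
    subst hy
    exact mem_connectedComponentIn hpiA

/-- At levels above an odd (max) critical value the two adjacent minima get merged. -/
lemma MD.merge (h : MD f m p) {i : ℕ} (him : i < m) (hio : ¬ Even i) {t : ℝ}
    (ht : f (p i) ≤ t) :
    Set.Icc (p (i-1)) (p (i+1)) ⊆ sublevel f t ∧
    connectedComponentIn (sublevel f t) (p (i-1)) = connectedComponentIn (sublevel f t) (p (i+1)) := by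
  have hi0 : 0 < i := by
    rcases Nat.eq_zero_or_pos i with rfl | hp
    · exact absurd Even.zero hio
    · exact hp
  have him1 : i - 1 < m := by omega
  have hieven : Even (i-1) := by
    rcases Nat.even_or_odd i with he | ho
    · exact absurd he hio
    · rcases ho with ⟨c, hc⟩; exact ⟨c, by omega⟩
  have hsub : i - 1 + 1 = i := by omega
  have hinc := h.inc (i-1) him1 hieven
  rw [hsub] at hinc
  have hdec := h.dec i him hio
  have hsubl : Set.Icc (p (i-1)) (p (i+1)) ⊆ sublevel f t := by
    intro x hx
    have hx01 : x ∈ Set.Icc (0:ℝ) 1 :=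
      ⟨le_trans (h.pmem (by omega : i - 1 ≤ m)).1 hx.1, le_trans hx.2 (h.pmem (by omega)).2⟩
    refine ⟨hx01, ?_⟩
    rcases le_total x (p i) with hle | hge
    · have : f x ≤ f (p i) := by
        apply hinc.monotoneOn ⟨hx.1, hle⟩ ⟨h.ple (i-1) i (by omega) (by omega), le_rfl⟩ hle
      linarith
    · have : f x ≤ f (p i) := by
        have := hdec.antitoneOn ⟨le_rfl, (h.plt i him).le⟩ ⟨hge, hx.2⟩ hge
        linarith
      linarith
  constructor
  · exact hsubl
  · have hmem1 : p (i-1) ∈ Set.Icc (p (i-1)) (p (i+1)) :=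
      ⟨le_rfl, h.ple (i-1) (i+1) (by omega) (by omega)⟩
    have hmem2 : p (i+1) ∈ Set.Icc (p (i-1)) (p (i+1)) :=
      ⟨h.ple (i-1) (i+1) (by omega) (by omega), le_rfl⟩
    have hsc := isPreconnected_Icc.subset_connectedComponentIn hmem1 hsubl
    exact connectedComponentIn_eq (hsc hmem2)

/-- A Morse-like function is not constant on a nondegenerate interval. -/
lemma MD.not_const (h : MD f m p) {t c d : ℝ} (hcd : c < d)
    (hsubm : Set.Icc c d ⊆ Set.Icc 0 1) (hconst : ∀ z ∈ Set.Icc c d, f z = t) : False := by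
  obtain ⟨i, him, hci⟩ := h.cover (hsubm ⟨le_rfl, hcd.le⟩)
  have hinj : ∀ j, j < m → Set.InjOn f (Set.Icc (p j) (p (j+1))) := by
    intro j hjm
    by_cases hje : Even j
    · exact (h.inc j hjm hje).injOn
    · exact (h.dec j hjm hje).injOn
  rcases lt_or_eq_of_le hci.2 with hlt | heq
  · set z := min d (p (i+1)) with hz
    have hcz : c < z := lt_min hcd hlt
    have hzmem : z ∈ Set.Icc (p i) (p (i+1)) := ⟨le_trans hci.1 hcz.le, min_le_right _ _⟩
    have hzd : z ∈ Set.Icc c d := ⟨hcz.le, min_le_left _ _⟩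
    have : f c = f z := by rw [hconst c ⟨le_rfl, hcd.le⟩, hconst z hzd]
    exact absurd (hinj i him ⟨hci.1, hci.2⟩ hzmem this) (ne_of_lt hcz)
  · -- c = p (i+1)
    have hi1m : i + 1 < m := by
      rcases Nat.lt_or_ge (i+1) m with hlt' | hge
      · exact hlt'
      · exfalso
        have : i + 1 = m := by omega
        have hc1 : c = 1 := by rw [heq, this, h.pm]
        have := (hsubm ⟨hcd.le, le_rfl⟩).2
        linarith
    set z := min d (p (i+2)) with hz
    have hcz : c < z := lt_min hcd (by rw [heq]; exact h.plt (i+1) hi1m)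
    have hzmem : z ∈ Set.Icc (p (i+1)) (p (i+2)) := ⟨by rw [← heq]; exact hcz.le, min_le_right _ _⟩
    have hcmem : c ∈ Set.Icc (p (i+1)) (p (i+2)) := ⟨le_of_eq heq.symm, by rw [heq]; exact (h.plt (i+1) hi1m).le⟩
    have hzd : z ∈ Set.Icc c d := ⟨hcz.le, min_le_left _ _⟩
    have : f c = f z := by rw [hconst c ⟨le_rfl, hcd.le⟩, hconst z hzd]
    exact absurd (hinj (i+1) hi1m hcmem hzmem this) (ne_of_lt hcz)

/-- A point whose component at its own level is a singleton is an (even) critical point. -/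
lemma MD.singleton_is_min (h : MD f m p) {t y : ℝ} (hy : y ∈ Set.Icc (0:ℝ) 1) (hft : f y = t)
    (hcomp : connectedComponentIn (sublevel f t) y = {y}) :
    ∃ j, j ≤ m ∧ Even j ∧ y = p j := by
  have hyA : y ∈ sublevel f t := ⟨hy, hft.le⟩
  obtain ⟨i, him, hyi⟩ := h.cover hy
  by_cases hie : Even i
  · refine ⟨i, by omega, hie, ?_⟩
    by_contra hne
    have hlt : p i < y := lt_of_le_of_ne hyi.1 (fun hh => hne hh.symm)
    have hmono := h.inc i him hie
    have hsubl : Set.Icc (p i) y ⊆ sublevel f t := by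
      intro w hw
      refine ⟨⟨le_trans (h.pmem (by omega : i ≤ m)).1 hw.1, le_trans hw.2 hy.2⟩, ?_⟩
      have : f w ≤ f y := hmono.monotoneOn ⟨hw.1, le_trans hw.2 hyi.2⟩ hyi hw.2
      linarith
    have hsc := isPreconnected_Icc.subset_connectedComponentIn
      (⟨hlt.le, le_rfl⟩ : y ∈ Set.Icc (p i) y) hsubl
    rw [hcomp] at hsc
    have := hsc ⟨le_rfl, hlt.le⟩
    simp only [mem_singleton_iff] at this
    exact hne this.symm
  · refine ⟨i + 1, by omega, by simpa [Nat.even_add_one] using hie, ?_⟩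
    by_contra hne
    have hlt : y < p (i+1) := lt_of_le_of_ne hyi.2 hne
    have hanti := h.dec i him hie
    have hsubl : Set.Icc y (p (i+1)) ⊆ sublevel f t := by
      intro w hw
      refine ⟨⟨le_trans hy.1 hw.1, le_trans hw.2 (h.pmem (by omega : i + 1 ≤ m)).2⟩, ?_⟩
      have : f w ≤ f y := hanti.antitoneOn hyi ⟨le_trans hyi.1 hw.1, hw.2⟩ hw.1
      linarith
    have hsc := isPreconnected_Icc.subset_connectedComponentIn
      (⟨le_rfl, hlt.le⟩ : y ∈ Set.Icc y (p (i+1))) hsubl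
    rw [hcomp] at hsc
    have := hsc ⟨hlt.le, le_rfl⟩
    simp only [mem_singleton_iff] at this
    exact hne this.symm

end MyAux
namespace MyAux
open Set

lemma MD.injOnPiece {g : ℝ → ℝ} {m : ℕ} {q : ℕ → ℝ} (hg : MD g m q) {i : ℕ} (him : i < m) :
    Set.InjOn g (Set.Icc (q i) (q (i+1))) := by
  by_cases hie : Even i
  · exact (hg.inc i him hie).injOn
  · exact (hg.dec i him hie).injOn

lemma glue (f g : ℝ → ℝ) {m : ℕ} {p q : ℕ → ℝ} (hf : MD f m p) (hg : MD g m q)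
    (hv : ∀ i, i ≤ m → f (p i) = g (q i)) : GraphEquiv f g := by
  classical
  set Pred : ℝ → ℝ → Prop := fun x y =>
    ∃ i, i < m ∧ x ∈ Set.Icc (p i) (p (i+1)) ∧ y ∈ Set.Icc (q i) (q (i+1)) ∧ g y = f x
    with hPred
  -- uniqueness
  have key : ∀ x y y' i i', i < m → i' < m → i ≤ i' →
      x ∈ Set.Icc (p i) (p (i+1)) → x ∈ Set.Icc (p i') (p (i'+1)) →
      y ∈ Set.Icc (q i) (q (i+1)) → y' ∈ Set.Icc (q i') (q (i'+1)) →
      g y = f x → g y' = f x → y = y' := by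
    intro x y y' i i' him him' hii hxi hxi' hyi hyi' hgy hgy'
    rcases eq_or_lt_of_le hii with rfl | hlt
    · exact hg.injOnPiece him hyi hyi' (by rw [hgy, hgy'])
    · -- i < i' : forced x = p (i+1) = p i'
      have hii1 : i' = i + 1 := by
        by_contra hne
        have : i + 1 < i' := by omega
        have := hf.pltlt (i+1) i' this (by omega)
        have h1 : x ≤ p (i+1) := hxi.2
        have h2 : p i' ≤ x := hxi'.1
        linarith
      subst hii1
      have hx1 : x = p (i+1) := le_antisymm hxi.2 hxi'.1
      have hfx : f x = g (q (i+1)) := by rw [hx1, hv (i+1) (by omega)]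
      have hy1 : y = q (i+1) := by
        apply hg.injOnPiece him hyi ⟨(hg.plt i him).le, le_rfl⟩
        rw [hgy, hfx]
      have hy2 : y' = q (i+1) := by
        apply hg.injOnPiece him' hyi' ⟨le_rfl, (hg.plt (i+1) him').le⟩
        rw [hgy', hfx]
      rw [hy1, hy2]
  have huniq : ∀ x y y', Pred x y → Pred x y' → y = y' := by
    rintro x y y' ⟨i, him, hxi, hyi, hgy⟩ ⟨i', him', hxi', hyi', hgy'⟩
    rcases le_total i i' with hii | hii
    · exact key x y y' i i' him him' hii hxi hxi' hyi hyi' hgy hgy'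
    · exact (key x y' y i' i him' him hii hxi' hxi hyi' hyi hgy' hgy).symm
  -- existence
  have hex : ∀ x ∈ Set.Icc (0:ℝ) 1, ∃ y, Pred x y := by
    intro x hx
    obtain ⟨i, him, hxi⟩ := hf.cover hx
    have hqle : q i ≤ q (i+1) := (hg.plt i him).le
    have hgc : ContinuousOn g (Set.Icc (q i) (q (i+1))) := by
      apply hg.cont.mono
      intro w hw
      exact ⟨le_trans (hg.pmem (by omega : i ≤ m)).1 hw.1,
             le_trans hw.2 (hg.pmem (by omega : i + 1 ≤ m)).2⟩
    by_cases hie : Even i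
    · have hmono := hf.inc i him hie
      have hfx : f x ∈ Set.Icc (g (q i)) (g (q (i+1))) := by
        rw [← hv i (by omega), ← hv (i+1) (by omega)]
        constructor
        · exact hmono.monotoneOn ⟨le_rfl, (hf.plt i him).le⟩ hxi hxi.1
        · exact hmono.monotoneOn hxi ⟨(hf.plt i him).le, le_rfl⟩ hxi.2
      obtain ⟨y, hy, hgy⟩ := intermediate_value_Icc hqle hgc hfx
      exact ⟨y, i, him, hxi, hy, hgy⟩
    · have hanti := hf.dec i him hie
      have hfx : f x ∈ Set.Icc (g (q (i+1))) (g (q i)) := by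
        rw [← hv i (by omega), ← hv (i+1) (by omega)]
        constructor
        · exact hanti.antitoneOn hxi ⟨(hf.plt i him).le, le_rfl⟩ hxi.2
        · exact hanti.antitoneOn ⟨le_rfl, (hf.plt i him).le⟩ hxi hxi.1
      obtain ⟨y, hy, hgy⟩ := intermediate_value_Icc' hqle hgc hfx
      exact ⟨y, i, him, hxi, hy, hgy⟩
  set φ : ℝ → ℝ := fun x => sInf {y | Pred x y} with hφ
  have hφspec : ∀ x ∈ Set.Icc (0:ℝ) 1, Pred x (φ x) := by
    intro x hx
    obtain ⟨y, hy⟩ := hex x hx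
    have hset : {y' | Pred x y'} = {y} := by
      ext y'
      simp only [mem_setOf_eq, mem_singleton_iff]
      exact ⟨fun h => huniq x y' y h hy, fun h => h ▸ hy⟩
    rw [hφ]
    simp only
    rw [hset, csInf_singleton]
    exact hy
  have hφeq : ∀ x ∈ Set.Icc (0:ℝ) 1, ∀ y, Pred x y → φ x = y := by
    intro x hx y hy
    exact huniq x (φ x) y (hφspec x hx) hy
  have hgfφ : ∀ x ∈ Set.Icc (0:ℝ) 1, f x = g (φ x) := by
    intro x hx
    obtain ⟨i, _, _, _, hgy⟩ := hφspec x hx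
    exact hgy.symm
  have hmaps : Set.MapsTo φ (Set.Icc 0 1) (Set.Icc 0 1) := by
    intro x hx
    obtain ⟨i, him, _, hyi, _⟩ := hφspec x hx
    exact ⟨le_trans (hg.pmem (by omega : i ≤ m)).1 hyi.1,
           le_trans hyi.2 (hg.pmem (by omega : i + 1 ≤ m)).2⟩
  have hmono : StrictMonoOn φ (Set.Icc 0 1) := by
    intro x hx x' hx' hxx
    obtain ⟨i, him, hxi, hyi, hgy⟩ := hφspec x hx
    obtain ⟨i', him', hxi', hyi', hgy'⟩ := hφspec x' hx'
    rcases lt_trichotomy i i' with hii | rfl | hii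
    · -- i < i'
      have hle : φ x ≤ φ x' := by
        calc φ x ≤ q (i+1) := hyi.2
        _ ≤ q i' := hg.ple (i+1) i' (by omega) (by omega)
        _ ≤ φ x' := hyi'.1
      rcases lt_or_eq_of_le hle with h | h
      · exact h
      · exfalso
        have hii1 : i' = i + 1 := by
          by_contra hne
          have h1 : q (i+1) < q i' := hg.pltlt (i+1) i' (by omega) (by omega)
          have h2 : φ x ≤ q (i+1) := hyi.2
          have h3 : q i' ≤ φ x' := hyi'.1
          linarith
        subst hii1
        have hq1 : φ x = q (i+1) := le_antisymm hyi.2 (h ▸ hyi'.1)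
        have hq2 : φ x' = q (i+1) := le_antisymm (h ▸ hyi.2) hyi'.1
        have hfx : f x = f (p (i+1)) := by
          rw [← hgy, hq1, hv (i+1) (by omega)]
        have hfx' : f x' = f (p (i+1)) := by
          rw [← hgy', hq2, hv (i+1) (by omega)]
        have hinjf : Set.InjOn f (Set.Icc (p i) (p (i+1))) := by
          by_cases hie : Even i
          · exact (hf.inc i him hie).injOn
          · exact (hf.dec i him hie).injOn
        have hinjf' : Set.InjOn f (Set.Icc (p (i+1)) (p (i+2))) := by
          by_cases hie : Even (i+1)
          · exact (hf.inc (i+1) him' hie).injOn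
          · exact (hf.dec (i+1) him' hie).injOn
        have hx1 : x = p (i+1) := hinjf hxi ⟨(hf.plt i him).le, le_rfl⟩ hfx
        have hx2 : x' = p (i+1) := hinjf' hxi' ⟨le_rfl, (hf.plt (i+1) him').le⟩ hfx'
        rw [hx1, hx2] at hxx
        exact lt_irrefl _ hxx
    · -- same piece
      by_cases hie : Even i
      · have hfxx : f x < f x' := hf.inc i him hie hxi hxi' hxx
        by_contra hcon
        push_neg at hcon
        have : g (φ x') ≤ g (φ x) := (hg.inc i him hie).monotoneOn hyi' hyi hcon
        rw [hgy, hgy'] at this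
        linarith
      · have hfxx : f x' < f x := hf.dec i him hie hxi hxi' hxx
        by_contra hcon
        push_neg at hcon
        have : g (φ x) ≤ g (φ x') := (hg.dec i him hie).antitoneOn hyi' hyi hcon
        rw [hgy, hgy'] at this
        linarith
    · -- i' < i impossible
      exfalso
      have h1 : p (i'+1) ≤ p i := hf.ple (i'+1) i (by omega) (by omega)
      have h2 : x' ≤ p (i'+1) := hxi'.2
      have h3 : p i ≤ x := hxi.1
      linarith
  have hsurj : Set.SurjOn φ (Set.Icc 0 1) (Set.Icc 0 1) := by
    intro y hy
    obtain ⟨i, him, hyi⟩ := hg.cover hy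
    have hple : p i ≤ p (i+1) := (hf.plt i him).le
    have hfc : ContinuousOn f (Set.Icc (p i) (p (i+1))) := by
      apply hf.cont.mono
      intro w hw
      exact ⟨le_trans (hf.pmem (by omega : i ≤ m)).1 hw.1,
             le_trans hw.2 (hf.pmem (by omega : i + 1 ≤ m)).2⟩
    have hgmem : ∃ x ∈ Set.Icc (p i) (p (i+1)), f x = g y := by
      by_cases hie : Even i
      · have hmono := hg.inc i him hie
        have : g y ∈ Set.Icc (f (p i)) (f (p (i+1))) := by
          rw [hv i (by omega), hv (i+1) (by omega)]
          exact ⟨hmono.monotoneOn ⟨le_rfl, (hg.plt i him).le⟩ hyi hyi.1,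
                 hmono.monotoneOn hyi ⟨(hg.plt i him).le, le_rfl⟩ hyi.2⟩
        obtain ⟨x, hx, hfx⟩ := intermediate_value_Icc hple hfc this
        exact ⟨x, hx, hfx⟩
      · have hanti := hg.dec i him hie
        have : g y ∈ Set.Icc (f (p (i+1))) (f (p i)) := by
          rw [hv i (by omega), hv (i+1) (by omega)]
          exact ⟨hanti.antitoneOn hyi ⟨(hg.plt i him).le, le_rfl⟩ hyi.2,
                 hanti.antitoneOn ⟨le_rfl, (hg.plt i him).le⟩ hyi hyi.1⟩
        obtain ⟨x, hx, hfx⟩ := intermediate_value_Icc' hple hfc this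
        exact ⟨x, hx, hfx⟩
    obtain ⟨x, hx, hfx⟩ := hgmem
    have hx01 : x ∈ Set.Icc (0:ℝ) 1 :=
      ⟨le_trans (hf.pmem (by omega : i ≤ m)).1 hx.1,
       le_trans hx.2 (hf.pmem (by omega : i + 1 ≤ m)).2⟩
    refine ⟨x, hx01, ?_⟩
    exact hφeq x hx01 y ⟨i, him, hx, hyi, hfx.symm⟩
  -- continuity via order isomorphism
  have hcont : ContinuousOn φ (Set.Icc 0 1) := by
    have hoc : OrdConnected (Set.Icc (0:ℝ) 1) := ordConnected_Icc
    set Φ : Set.Icc (0:ℝ) 1 → Set.Icc (0:ℝ) 1 := fun x => ⟨φ x, hmaps x.2⟩ with hΦ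
    have hΦmono : StrictMono Φ := by
      intro a b hab
      have : φ a < φ b := hmono a.2 b.2 (Subtype.coe_lt_coe.mpr hab)
      exact Subtype.mk_lt_mk.mpr this
    have hΦsurj : Function.Surjective Φ := by
      intro y
      obtain ⟨x, hx, hxy⟩ := hsurj y.2
      exact ⟨⟨x, hx⟩, Subtype.ext hxy⟩
    have hΦcont : Continuous Φ := by
      have := (StrictMono.orderIsoOfSurjective Φ hΦmono hΦsurj).continuous
      rwa [StrictMono.coe_orderIsoOfSurjective] at this
    rw [continuousOn_iff_continuous_restrict]
    exact continuous_subtype_val.comp hΦcont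
  exact ⟨φ, hcont, hmono, hmaps, hsurj, hgfφ⟩

end MyAux
namespace MyAux
open Set

lemma sublevel_mono (g : ℝ → ℝ) {r t : ℝ} (hrt : r ≤ t) : sublevel g r ⊆ sublevel g t :=
  fun x hx => ⟨hx.1, hx.2.trans hrt⟩

/-- Transfer of the inclusion relation through the two realizations. -/
lemma incl_transfer {f g : ℝ → ℝ} {T : CMT} (hT : T.LocalValid)
    (α : ∀ t : ℝ, {C : Set ℝ // C ∈ Components (sublevel f t)} → {w : List Bool // T.MemS t w})
    (β : ∀ t : ℝ, {C : Set ℝ // C ∈ Components (sublevel g t)} → {w : List Bool // T.MemS t w})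
    (hβbij : ∀ t, Function.Bijective (β t))
    (hαincl : ∀ r t : ℝ, r ≤ t →
      ∀ (C : {C : Set ℝ // C ∈ Components (sublevel f r)})
        (D : {C : Set ℝ // C ∈ Components (sublevel f t)}),
        C.1 ⊆ D.1 → (α t D).1 <+: (α r C).1)
    (hβincl : ∀ r t : ℝ, r ≤ t →
      ∀ (C : {C : Set ℝ // C ∈ Components (sublevel g r)})
        (D : {C : Set ℝ // C ∈ Components (sublevel g t)}),
        C.1 ⊆ D.1 → (β t D).1 <+: (β r C).1)
    (r t : ℝ) (hrt : r ≤ t)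
    (C : {C : Set ℝ // C ∈ Components (sublevel f r)})
    (D : {C : Set ℝ // C ∈ Components (sublevel f t)}) (hCD : C.1 ⊆ D.1) :
    ((Equiv.ofBijective (β r) (hβbij r)).symm (α r C)).1 ⊆
      ((Equiv.ofBijective (β t) (hβbij t)).symm (α t D)).1 := by
  set C' := (Equiv.ofBijective (β r) (hβbij r)).symm (α r C) with hC'
  have hβC' : β r C' = α r C := by
    have := (Equiv.ofBijective (β r) (hβbij r)).apply_symm_apply (α r C)
    exact this
  obtain ⟨x, hx⟩ := comp_nonempty C'.2
  have hxr : x ∈ sublevel g r := comp_subset' C'.2 hx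
  have hxt : x ∈ sublevel g t := sublevel_mono g hrt hxr
  set D'' : {C : Set ℝ // C ∈ Components (sublevel g t)} :=
    ⟨connectedComponentIn (sublevel g t) x, comp_mem_components hxt⟩ with hD''
  have hCD'' : C'.1 ⊆ D''.1 := by
    rw [comp_eq_of_mem C'.2 hx]
    exact (connectedComponentIn_mono x (sublevel_mono g hrt))
  have h1 : (β t D'').1 <+: (β r C').1 := hβincl r t hrt C' D'' hCD''
  have h2 : (α t D).1 <+: (α r C).1 := hαincl r t hrt C D hCD
  rw [hβC'] at h1
  have heq : (β t D'').1 = (α t D).1 :=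
    memS_prefix_eq hT (β t D'').2 (α t D).2 h1 h2
  have hD2 : D'' = (Equiv.ofBijective (β t) (hβbij t)).symm (α t D) := by
    apply (Equiv.ofBijective (β t) (hβbij t)).injective
    rw [(Equiv.ofBijective (β t) (hβbij t)).apply_symm_apply]
    exact Subtype.ext heq
  rw [← hD2]
  exact hCD''

/-- Step A: the image under γ of the singleton component at an (even) local minimum of `f`
is a singleton component at an (even) local minimum of `g` with the same value. -/
lemma stepA {f g : ℝ → ℝ} {mf mg : ℕ} {pf qg : ℕ → ℝ} (hF : MD f mf pf) (hG : MD g mg qg)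
    (γ : ∀ t : ℝ, {C : Set ℝ // C ∈ Components (sublevel f t)} →
        {C : Set ℝ // C ∈ Components (sublevel g t)})
    (δ : ∀ t : ℝ, {C : Set ℝ // C ∈ Components (sublevel g t)} →
        {C : Set ℝ // C ∈ Components (sublevel f t)})
    (hinv : ∀ t C, δ t (γ t C) = C)
    (hδincl : ∀ r t : ℝ, r ≤ t →
      ∀ (C : {C : Set ℝ // C ∈ Components (sublevel g r)})
        (D : {C : Set ℝ // C ∈ Components (sublevel g t)}),
        C.1 ⊆ D.1 → (δ r C).1 ⊆ (δ t D).1)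
    {i : ℕ} (hi : i ≤ mf) (hie : Even i) :
    ∃ j, j ≤ mg ∧ Even j ∧ g (qg j) = f (pf i) ∧
      (γ (f (pf i)) ⟨{pf i}, by
        rw [← hF.singleton_comp hi hie]
        exact comp_mem_components ⟨hF.pmem hi, le_rfl⟩⟩).1 = {qg j} := by
  set v := f (pf i) with hv
  have hmem : ({pf i} : Set ℝ) ∈ Components (sublevel f v) := by
    rw [← hF.singleton_comp hi hie]
    exact comp_mem_components ⟨hF.pmem hi, le_rfl⟩
  set Cf : {C : Set ℝ // C ∈ Components (sublevel f v)} := ⟨{pf i}, hmem⟩ with hCf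
  set D := γ v Cf with hD
  -- every point of D has value exactly v
  have hval : ∀ z ∈ D.1, g z = v := by
    intro z hz
    have hzA : z ∈ sublevel g v := comp_subset' D.2 hz
    refine le_antisymm hzA.2 ?_
    by_contra hcon
    push_neg at hcon
    set t' := g z with ht'
    have ht'v : t' < v := hcon
    have hzt' : z ∈ sublevel g t' := ⟨hzA.1, le_rfl⟩
    set C' : {C : Set ℝ // C ∈ Components (sublevel g t')} :=
      ⟨connectedComponentIn (sublevel g t') z, comp_mem_components hzt'⟩ with hC'
    have hC'D : C'.1 ⊆ D.1 := by
      have h1 : C'.1 ⊆ connectedComponentIn (sublevel g v) z :=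
        connectedComponentIn_mono z (sublevel_mono g ht'v.le)
      rwa [← comp_eq_of_mem D.2 hz] at h1
    have hsub := hδincl t' v ht'v.le C' D hC'D
    rw [hinv] at hsub
    have hpz : pf i ∈ (δ t' C').1 := by
      obtain ⟨w, hw⟩ := comp_nonempty (δ t' C').2
      have := hsub hw
      simp only [hCf, mem_singleton_iff] at this
      rwa [this] at hw
    have : f (pf i) ≤ t' := (comp_subset' (δ t' C').2 hpz).2
    rw [← hv] at this
    linarith
  -- D is a singleton
  obtain ⟨y, hy⟩ := comp_nonempty D.2
  have hDy : D.1 = {y} := by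
    rw [eq_singleton_iff_unique_mem]
    refine ⟨hy, ?_⟩
    intro z hz
    by_contra hne
    have hoc : OrdConnected D.1 := by
      obtain ⟨x0, hx0, hEq⟩ := D.2
      rw [hEq]
      exact comp_ordConnected
    have hIcc : Set.Icc (min z y) (max z y) ⊆ D.1 := by
      rcases le_total z y with h | h
      · rw [min_eq_left h, max_eq_right h]
        exact hoc.out hz hy
      · rw [min_eq_right h, max_eq_left h]
        exact hoc.out hy hz
    have hlt : min z y < max z y := by
      rcases lt_or_gt_of_ne hne with h | h
      · rw [min_eq_left h.le, max_eq_right h.le]; exact h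
      · rw [min_eq_right h.le, max_eq_left h.le]; exact h
    apply hG.not_const hlt
    · intro w hw
      exact (comp_subset' D.2 (hIcc hw)).1
    · intro w hw
      exact hval w (hIcc hw)
  have hyIcc : y ∈ Set.Icc (0:ℝ) 1 := (comp_subset' D.2 hy).1
  have hgy : g y = v := hval y hy
  have hycomp : connectedComponentIn (sublevel g v) y = {y} := by
    rw [← comp_eq_of_mem D.2 hy, hDy]
  obtain ⟨j, hj, hje, hyj⟩ := hG.singleton_is_min hyIcc hgy hycomp
  refine ⟨j, hj, hje, ?_, ?_⟩
  · rw [← hyj, hgy]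
  · show D.1 = {qg j}
    rw [hDy, hyj]

end MyAux
/-- two Morse-like functions on `[0,1]` with local minima at `0`
and `1` realizing the same valid chiral merge tree are graph-equivalent. -/
theorem same_cmt_implies_graph_equiv (f g : ℝ → ℝ) (hf : MorseLike f) (hg : MorseLike g)
    (hf0 : IsLocalMinOn f (Set.Icc 0 1) 0) (hf1 : IsLocalMinOn f (Set.Icc 0 1) 1)
    (hg0 : IsLocalMinOn g (Set.Icc 0 1) 0) (hg1 : IsLocalMinOn g (Set.Icc 0 1) 1)
    (T : CMT) (hT : T.Valid) (hfT : RealizesCMT f T) (hgT : RealizesCMT g T) :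
    GraphEquiv f g := by
  classical
  open MyAux Set in
  obtain ⟨mf, pf, hF⟩ := MyAux.morse_data hf hf0 hf1
  obtain ⟨mg, qg, hG⟩ := MyAux.morse_data hg hg0 hg1
  obtain ⟨α, hαbij, hαord, hαincl⟩ := hfT
  obtain ⟨β, hβbij, hβord, hβincl⟩ := hgT
  set γ : ∀ t : ℝ, {C : Set ℝ // C ∈ Components (sublevel f t)} →
      {C : Set ℝ // C ∈ Components (sublevel g t)} :=
    fun t C => (Equiv.ofBijective (β t) (hβbij t)).symm (α t C) with hγdef
  set δ : ∀ t : ℝ, {C : Set ℝ // C ∈ Components (sublevel g t)} →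
      {C : Set ℝ // C ∈ Components (sublevel f t)} :=
    fun t D => (Equiv.ofBijective (α t) (hαbij t)).symm (β t D) with hδdef
  have hβγ : ∀ t C, β t (γ t C) = α t C := fun t C =>
    (Equiv.ofBijective (β t) (hβbij t)).apply_symm_apply (α t C)
  have hαδ : ∀ t D, α t (δ t D) = β t D := fun t D =>
    (Equiv.ofBijective (α t) (hαbij t)).apply_symm_apply (β t D)
  have hinv1 : ∀ t C, δ t (γ t C) = C := by
    intro t C
    apply (hαbij t).1
    rw [hαδ, hβγ]
  have hinv2 : ∀ t D, γ t (δ t D) = D := by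
    intro t D
    apply (hβbij t).1
    rw [hβγ, hαδ]
  have hγincl : ∀ r t : ℝ, r ≤ t →
      ∀ (C : {C : Set ℝ // C ∈ Components (sublevel f r)})
        (D : {C : Set ℝ // C ∈ Components (sublevel f t)}),
        C.1 ⊆ D.1 → (γ r C).1 ⊆ (γ t D).1 :=
    fun r t hrt C D h =>
      MyAux.incl_transfer hT.2 α β hβbij hαincl hβincl r t hrt C D h
  have hδincl : ∀ r t : ℝ, r ≤ t →
      ∀ (C : {C : Set ℝ // C ∈ Components (sublevel g r)})
        (D : {C : Set ℝ // C ∈ Components (sublevel g t)}),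
        C.1 ⊆ D.1 → (δ r C).1 ⊆ (δ t D).1 :=
    fun r t hrt C D h =>
      MyAux.incl_transfer hT.2 β α hαbij hβincl hαincl r t hrt C D h
  have hγord : ∀ (t : ℝ) (C D : {C : Set ℝ // C ∈ Components (sublevel f t)}),
      CompLT C.1 D.1 ↔ CompLT (γ t C).1 (γ t D).1 := by
    intro t C D
    have h1 := hβord t (γ t C) (γ t D)
    rw [hβγ, hβγ] at h1
    exact (hαord t C D).trans h1.symm
  have hγinj : ∀ t, Function.Injective (γ t) := by
    intro t C D h
    have := congrArg (δ t) h
    rwa [hinv1, hinv1] at this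
  -- canonical singleton components
  have hFmem : ∀ i, i ≤ mf → Even i →
      ({pf i} : Set ℝ) ∈ Components (sublevel f (f (pf i))) := by
    intro i hi hie
    rw [← hF.singleton_comp hi hie]
    exact MyAux.comp_mem_components ⟨hF.pmem hi, le_rfl⟩
  have hGmem : ∀ j, j ≤ mg → Even j →
      ({qg j} : Set ℝ) ∈ Components (sublevel g (g (qg j))) := by
    intro j hj hje
    rw [← hG.singleton_comp hj hje]
    exact MyAux.comp_mem_components ⟨hG.pmem hj, le_rfl⟩
  -- Step A in both directions
  have hSA : ∀ i, i ≤ mf → Even i → ∃ j, j ≤ mg ∧ Even j ∧ g (qg j) = f (pf i) ∧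
      (∀ hm : ({pf i} : Set ℝ) ∈ Components (sublevel f (f (pf i))),
        (γ (f (pf i)) ⟨{pf i}, hm⟩).1 = {qg j}) := by
    intro i hi hie
    obtain ⟨j, h1, h2, h3, h4⟩ := MyAux.stepA hF hG γ δ hinv1 hδincl hi hie
    exact ⟨j, h1, h2, h3, fun hm => h4⟩
  have hSB : ∀ j, j ≤ mg → Even j → ∃ k, k ≤ mf ∧ Even k ∧ f (pf k) = g (qg j) ∧
      (∀ hm : ({qg j} : Set ℝ) ∈ Components (sublevel g (g (qg j))),
        (δ (g (qg j)) ⟨{qg j}, hm⟩).1 = {pf k}) := by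
    intro j hj hje
    obtain ⟨k, h1, h2, h3, h4⟩ := MyAux.stepA hG hF δ γ hinv2 hγincl hj hje
    exact ⟨k, h1, h2, h3, fun hm => h4⟩
  choose! J hJle hJev hJval hJcomp using hSA
  choose! K hKle hKev hKval hKcomp using hSB
  -- inverse identities
  have hKJ : ∀ i, i ≤ mf → Even i → K (J i) = i := by
    intro i hi hie
    have hji := hJle i hi hie
    have hje := hJev i hi hie
    have h5 := hKcomp (J i) hji hje
    rw [hJval i hi hie] at h5
    have hmspec : ({qg (J i)} : Set ℝ) ∈ Components (sublevel g (f (pf i))) := by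
      rw [← hJcomp i hi hie (hFmem i hi hie)]
      exact (γ (f (pf i)) ⟨{pf i}, hFmem i hi hie⟩).2
    have h6 := h5 hmspec
    have hEq : (⟨{qg (J i)}, hmspec⟩ : {C : Set ℝ // C ∈ Components (sublevel g (f (pf i)))})
        = γ (f (pf i)) ⟨{pf i}, hFmem i hi hie⟩ :=
      Subtype.ext (hJcomp i hi hie (hFmem i hi hie)).symm
    rw [hEq, hinv1] at h6
    have : pf i = pf (K (J i)) := by
      have := h6
      simp only [Set.singleton_eq_singleton_iff] at this
      exact this
    by_contra hne
    exact hF.dist i (K (J i)) hi (hKle (J i) hji hje) (fun h => hne h.symm)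
      (by rw [this])
  have hJK : ∀ j, j ≤ mg → Even j → J (K j) = j := by
    intro j hj hje
    have hkj := hKle j hj hje
    have hke := hKev j hj hje
    have h5 := hJcomp (K j) hkj hke
    rw [hKval j hj hje] at h5
    have hmspec : ({pf (K j)} : Set ℝ) ∈ Components (sublevel f (g (qg j))) := by
      rw [← hKcomp j hj hje (hGmem j hj hje)]
      exact (δ (g (qg j)) ⟨{qg j}, hGmem j hj hje⟩).2
    have h6 := h5 hmspec
    have hEq : (⟨{pf (K j)}, hmspec⟩ : {C : Set ℝ // C ∈ Components (sublevel f (g (qg j)))})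
        = δ (g (qg j)) ⟨{qg j}, hGmem j hj hje⟩ :=
      Subtype.ext (hKcomp j hj hje (hGmem j hj hje)).symm
    rw [hEq, hinv2] at h6
    have : qg j = qg (J (K j)) := by
      simp only [Set.singleton_eq_singleton_iff] at h6
      exact h6
    by_contra hne
    exact hG.dist j (J (K j)) hj (hJle (K j) hkj hke) (fun h => hne h.symm)
      (by rw [this])
  -- monotonicity of J on even indices
  have hJmono : ∀ i i', i ≤ mf → i' ≤ mf → Even i → Even i' → i < i' →
      qg (J i) < qg (J i') := by
    intro i i' hi hi' hie hie' hii
    have hvne : f (pf i) ≠ f (pf i') := hF.dist i i' hi hi' (by omega)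
    have hpi : pf i < pf i' := hF.pltlt i i' hii hi'
    rcases lt_or_gt_of_ne hvne with hv | hv
    · -- compare at level f (pf i')
      have hpiA : pf i ∈ sublevel f (f (pf i')) := ⟨hF.pmem hi, hv.le⟩
      set C : {C : Set ℝ // C ∈ Components (sublevel f (f (pf i')))} :=
        ⟨connectedComponentIn (sublevel f (f (pf i'))) (pf i),
          MyAux.comp_mem_components hpiA⟩ with hCdef
      set D' : {C : Set ℝ // C ∈ Components (sublevel f (f (pf i')))} :=
        ⟨{pf i'}, hFmem i' hi' hie'⟩ with hD'def
      have hCompLT : CompLT C.1 D'.1 := by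
        intro x hx y hy
        simp only [hD'def, Set.mem_singleton_iff] at hy
        subst hy
        by_contra hxy
        push_neg at hxy
        have hin : pf i' ∈ C.1 :=
          MyAux.comp_ordConnected.out (mem_connectedComponentIn hpiA) hx ⟨hpi.le, hxy⟩
        have hCeq : C.1 = {pf i'} := by
          rw [MyAux.comp_eq_of_mem C.2 hin]
          exact hF.singleton_comp hi' hie'
        have hpiC : pf i ∈ C.1 := mem_connectedComponentIn hpiA
        rw [hCeq] at hpiC
        simp only [Set.mem_singleton_iff] at hpiC
        exact absurd hpiC (ne_of_lt hpi)
      have h1 := (hγord (f (pf i')) C D').mp hCompLT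
      have hsub : ({pf i} : Set ℝ) ⊆ C.1 := by
        rw [Set.singleton_subset_iff]
        exact mem_connectedComponentIn hpiA
      have h2 := hγincl (f (pf i)) (f (pf i')) hv.le ⟨{pf i}, hFmem i hi hie⟩ C hsub
      rw [hJcomp i hi hie (hFmem i hi hie)] at h2
      have h3 : qg (J i) ∈ (γ (f (pf i')) C).1 := h2 rfl
      have h4 : qg (J i') ∈ (γ (f (pf i')) D').1 := by
        rw [hJcomp i' hi' hie' (hFmem i' hi' hie')]
        rfl
      exact h1 _ h3 _ h4
    · -- compare at level f (pf i)
      have hpi'A : pf i' ∈ sublevel f (f (pf i)) := ⟨hF.pmem hi', hv.le⟩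
      set C' : {C : Set ℝ // C ∈ Components (sublevel f (f (pf i)))} :=
        ⟨connectedComponentIn (sublevel f (f (pf i))) (pf i'),
          MyAux.comp_mem_components hpi'A⟩ with hC'def
      set D'' : {C : Set ℝ // C ∈ Components (sublevel f (f (pf i)))} :=
        ⟨{pf i}, hFmem i hi hie⟩ with hD''def
      have hCompLT : CompLT D''.1 C'.1 := by
        intro x hx y hy
        simp only [hD''def, Set.mem_singleton_iff] at hx
        subst hx
        by_contra hxy
        push_neg at hxy
        have hin : pf i ∈ C'.1 :=
          MyAux.comp_ordConnected.out hy (mem_connectedComponentIn hpi'A) ⟨hxy, hpi.le⟩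
        have hCeq : C'.1 = {pf i} := by
          rw [MyAux.comp_eq_of_mem C'.2 hin]
          exact hF.singleton_comp hi hie
        have hpiC : pf i' ∈ C'.1 := mem_connectedComponentIn hpi'A
        rw [hCeq] at hpiC
        simp only [Set.mem_singleton_iff] at hpiC
        exact absurd hpiC.symm (ne_of_lt hpi)
      have h1 := (hγord (f (pf i)) D'' C').mp hCompLT
      have hsub : ({pf i'} : Set ℝ) ⊆ C'.1 := by
        rw [Set.singleton_subset_iff]
        exact mem_connectedComponentIn hpi'A
      have h2 := hγincl (f (pf i')) (f (pf i)) hv.le ⟨{pf i'}, hFmem i' hi' hie'⟩ C' hsub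
      rw [hJcomp i' hi' hie' (hFmem i' hi' hie')] at h2
      have h3 : qg (J i') ∈ (γ (f (pf i)) C').1 := h2 rfl
      have h4 : qg (J i) ∈ (γ (f (pf i)) D'').1 := by
        rw [hJcomp i hi hie (hFmem i hi hie)]
        rfl
      exact h1 _ h4 _ h3
  have hJlt : ∀ i i', i ≤ mf → i' ≤ mf → Even i → Even i' → i < i' → J i < J i' := by
    intro i i' hi hi' hie hie' hii
    have := hJmono i i' hi hi' hie hie' hii
    by_contra hcon
    push_neg at hcon
    have := hG.ple (J i') (J i) hcon (hJle i hi hie)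
    linarith
  -- conclude mf = mg and J = id on even indices
  obtain ⟨nf, hnf⟩ := hF.meven
  obtain ⟨ng, hng⟩ := hG.meven
  have hJle2 : ∀ u : ℕ, u ≤ nf → J (2*u) / 2 ≤ ng := by
    intro u hu
    have h1 := hJle (2*u) (by omega) ⟨u, by omega⟩
    have h2 := hJev (2*u) (by omega) ⟨u, by omega⟩
    obtain ⟨c, hc⟩ := h2
    omega
  have hKle2 : ∀ u : ℕ, u ≤ ng → K (2*u) / 2 ≤ nf := by
    intro u hu
    have h1 := hKle (2*u) (by omega) ⟨u, by omega⟩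
    have h2 := hKev (2*u) (by omega) ⟨u, by omega⟩
    obtain ⟨c, hc⟩ := h2
    omega
  set σ : Fin (nf+1) → Fin (ng+1) := fun u => ⟨J (2*u.1) / 2, by
    have := hJle2 u.1 (by omega)
    omega⟩ with hσdef
  set τ : Fin (ng+1) → Fin (nf+1) := fun u => ⟨K (2*u.1) / 2, by
    have := hKle2 u.1 (by omega)
    omega⟩ with hτdef
  have hJdouble : ∀ u : ℕ, u ≤ nf → 2 * (J (2*u) / 2) = J (2*u) := by
    intro u hu
    obtain ⟨c, hc⟩ := hJev (2*u) (by omega) ⟨u, by omega⟩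
    omega
  have hKdouble : ∀ u : ℕ, u ≤ ng → 2 * (K (2*u) / 2) = K (2*u) := by
    intro u hu
    obtain ⟨c, hc⟩ := hKev (2*u) (by omega) ⟨u, by omega⟩
    omega
  have hτσ : ∀ u, τ (σ u) = u := by
    intro u
    apply Fin.ext
    show K (2 * (J (2*u.1) / 2)) / 2 = u.1
    rw [hJdouble u.1 (by omega)]
    rw [hKJ (2*u.1) (by omega) ⟨u.1, by omega⟩]
    omega
  have hστ : ∀ u, σ (τ u) = u := by
    intro u
    apply Fin.ext
    show J (2 * (K (2*u.1) / 2)) / 2 = u.1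
    rw [hKdouble u.1 (by omega)]
    rw [hJK (2*u.1) (by omega) ⟨u.1, by omega⟩]
    omega
  have hnfng : nf = ng := by
    have : Nonempty (Fin (nf+1) ≃ Fin (ng+1)) := ⟨⟨σ, τ, hτσ, hστ⟩⟩
    have := Fin.equiv_iff_eq.mp this
    omega
  subst hnfng
  have hmfg : mf = mg := by omega
  subst hmfg
  -- σ is a strictly monotone bijection of Fin (nf+1), hence the identity
  have hσmono : StrictMono σ := by
    intro u u' huu
    have h1 : (2*u.1) < 2*u'.1 := by
      have := Fin.lt_def.mp huu; omega
    have h2 := hJlt (2*u.1) (2*u'.1) (by omega) (by omega) ⟨u.1, by omega⟩ ⟨u'.1, by omega⟩ h1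
    rw [Fin.lt_def]
    show J (2*u.1) / 2 < J (2*u'.1) / 2
    have hd1 := hJdouble u.1 (by omega)
    have hd2 := hJdouble u'.1 (by omega)
    omega
  have hσid : ∀ u, σ u = u := by
    have hge : ∀ k (hk : k < nf+1), k ≤ (σ ⟨k, hk⟩).1 := by
      intro k
      induction k with
      | zero => intro hk; omega
      | succ v ih =>
        intro hk
        have h1 := ih (by omega)
        have h2 : σ ⟨v, by omega⟩ < σ ⟨v+1, hk⟩ := hσmono (Fin.mk_lt_mk.mpr (Nat.lt_succ_self v))
        have h3 := Fin.lt_def.mp h2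
        omega
    have hge' : ∀ k (hk : k < nf+1), k ≤ (τ ⟨k, hk⟩).1 := by
      have hτmono : StrictMono τ := by
        intro u u' huu
        by_contra hcon
        push_neg at hcon
        rcases eq_or_lt_of_le hcon with h | h
        · have := congrArg σ h
          rw [hστ, hστ] at this
          subst this
          exact lt_irrefl _ huu
        · have := hσmono h
          rw [hστ, hστ] at this
          exact absurd huu (not_lt.mpr this.le)
      intro k
      induction k with
      | zero => intro hk; omega
      | succ v ih =>
        intro hk
        have h1 := ih (by omega)
        have h2 : τ ⟨v, by omega⟩ < τ ⟨v+1, hk⟩ := hτmono (Fin.mk_lt_mk.mpr (Nat.lt_succ_self v))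
        have h3 := Fin.lt_def.mp h2
        omega
    intro u
    have h1 : u.1 ≤ (σ u).1 := by
      have := hge u.1 u.2
      simpa using this
    have h2 : (σ u).1 ≤ u.1 := by
      have h3 := hge' (σ u).1 (σ u).2
      have h4 : τ ⟨(σ u).1, (σ u).2⟩ = τ (σ u) := by congr
      rw [h4, hτσ] at h3
      exact h3
    exact Fin.ext (le_antisymm h2 h1)
  have hJid : ∀ i, i ≤ mf → Even i → J i = i := by
    intro i hi hie
    obtain ⟨u, hu⟩ := hie
    have hu' : i = 2*u := by omega
    subst hu'
    have h1 := hσid ⟨u, by omega⟩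
    have h2 : J (2*u) / 2 = u := by
      have := congrArg Fin.val h1
      simpa [hσdef] using this
    have := hJdouble u (by omega)
    omega
  have hveq : ∀ i, i ≤ mf → Even i → f (pf i) = g (qg i) := by
    intro i hi hie
    have := hJval i hi hie
    rw [hJid i hi hie] at this
    exact this.symm
  have hKid : ∀ j, j ≤ mf → Even j → K j = j := by
    intro j hj hje
    have := hKJ j hj hje
    rwa [hJid j hj hje] at this
  -- Step C: odd critical values agree
  have hoddeq : ∀ i, i < mf → ¬ Even i → f (pf i) = g (qg i) := by
    intro i him hio
    have hi0 : 0 < i := by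
      rcases Nat.eq_zero_or_pos i with rfl | h
      · exact absurd Even.zero hio
      · exact h
    have hi1e : Even (i-1) := by
      rcases Nat.even_or_odd i with he | ho
      · exact absurd he hio
      · obtain ⟨c, hc⟩ := ho; exact ⟨c, by omega⟩
    have hi1e' : Even (i+1) := by
      rcases Nat.even_or_odd i with he | ho
      · exact absurd he hio
      · obtain ⟨c, hc⟩ := ho; exact ⟨c+1, by omega⟩
    have hi1m : i - 1 ≤ mf := by omega
    have hi1m' : i + 1 ≤ mf := by omega
    have hsub1 : i - 1 + 1 = i := by omega
    -- strict inequalities below the max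
    have hvim : f (pf (i-1)) < f (pf i) := by
      have := hF.inc (i-1) (by omega) hi1e
      rw [hsub1] at this
      exact this ⟨le_rfl, (hF.pltlt (i-1) i (by omega) (by omega)).le⟩
        ⟨(hF.pltlt (i-1) i (by omega) (by omega)).le, le_rfl⟩
        (hF.pltlt (i-1) i (by omega) (by omega))
    have hvip : f (pf (i+1)) < f (pf i) := by
      have := hF.dec i him hio
      exact this ⟨le_rfl, (hF.plt i him).le⟩ ⟨(hF.plt i him).le, le_rfl⟩ (hF.plt i him)
    have hwim : g (qg (i-1)) < g (qg i) := by
      have := hG.inc (i-1) (by omega) hi1e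
      rw [hsub1] at this
      exact this ⟨le_rfl, (hG.pltlt (i-1) i (by omega) (by omega)).le⟩
        ⟨(hG.pltlt (i-1) i (by omega) (by omega)).le, le_rfl⟩
        (hG.pltlt (i-1) i (by omega) (by omega))
    have hwip : g (qg (i+1)) < g (qg i) := by
      have := hG.dec i him hio
      exact this ⟨le_rfl, (hG.plt i him).le⟩ ⟨(hG.plt i him).le, le_rfl⟩ (hG.plt i him)
    -- one-sided claim, f-side max bounded by g-side max
    have claim1 : f (pf i) ≤ g (qg i) := by
      by_contra hcon
      push_neg at hcon
      set t := max (max (f (pf (i-1))) (f (pf (i+1)))) (g (qg i)) with htdef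
      have hti : t < f (pf i) := by
        apply max_lt (max_lt hvim hvip) hcon
      have hA1 : pf (i-1) ∈ sublevel f t :=
        ⟨hF.pmem hi1m, le_trans (le_max_left _ _) (le_max_left _ _)⟩
      have hA2 : pf (i+1) ∈ sublevel f t :=
        ⟨hF.pmem hi1m', le_trans (le_max_right _ _) (le_max_left _ _)⟩
      set C1 : {C : Set ℝ // C ∈ Components (sublevel f t)} :=
        ⟨connectedComponentIn (sublevel f t) (pf (i-1)), MyAux.comp_mem_components hA1⟩
      set C2 : {C : Set ℝ // C ∈ Components (sublevel f t)} :=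
        ⟨connectedComponentIn (sublevel f t) (pf (i+1)), MyAux.comp_mem_components hA2⟩
      have hC12 : C1 ≠ C2 := by
        intro h
        have h1 : pf (i+1) ∈ C1.1 := by
          rw [h]; exact mem_connectedComponentIn hA2
        have h2 : pf i ∈ C1.1 := by
          apply MyAux.comp_ordConnected.out (mem_connectedComponentIn hA1) h1
          exact ⟨(hF.pltlt (i-1) i (by omega) (by omega)).le, (hF.plt i him).le⟩
        have := (MyAux.comp_subset' C1.2 h2).2
        linarith
      -- push to g
      have hsub1' : ({pf (i-1)} : Set ℝ) ⊆ C1.1 := by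
        rw [Set.singleton_subset_iff]; exact mem_connectedComponentIn hA1
      have hsub2' : ({pf (i+1)} : Set ℝ) ⊆ C2.1 := by
        rw [Set.singleton_subset_iff]; exact mem_connectedComponentIn hA2
      have hl1 : f (pf (i-1)) ≤ t := le_trans (le_max_left _ _) (le_max_left _ _)
      have hl2 : f (pf (i+1)) ≤ t := le_trans (le_max_right _ _) (le_max_left _ _)
      have hq1 := hγincl (f (pf (i-1))) t hl1 ⟨{pf (i-1)}, hFmem (i-1) hi1m hi1e⟩ C1 hsub1'
      have hq2 := hγincl (f (pf (i+1))) t hl2 ⟨{pf (i+1)}, hFmem (i+1) hi1m' hi1e'⟩ C2 hsub2'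
      rw [hJcomp (i-1) hi1m hi1e (hFmem (i-1) hi1m hi1e)] at hq1
      rw [hJcomp (i+1) hi1m' hi1e' (hFmem (i+1) hi1m' hi1e')] at hq2
      rw [hJid (i-1) hi1m hi1e] at hq1
      rw [hJid (i+1) hi1m' hi1e'] at hq2
      have hm1 : qg (i-1) ∈ (γ t C1).1 := hq1 rfl
      have hm2 : qg (i+1) ∈ (γ t C2).1 := hq2 rfl
      have hγne : (γ t C1).1 ≠ (γ t C2).1 := by
        intro h
        exact hC12 (hγinj t (Subtype.ext h))
      -- but merging in g says they are equal
      have hmerge := (hG.merge him hio (le_max_right _ _ : g (qg i) ≤ t)).2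
      have he1 : (γ t C1).1 = connectedComponentIn (sublevel g t) (qg (i-1)) :=
        MyAux.comp_eq_of_mem (γ t C1).2 hm1
      have he2 : (γ t C2).1 = connectedComponentIn (sublevel g t) (qg (i+1)) :=
        MyAux.comp_eq_of_mem (γ t C2).2 hm2
      rw [he1, he2] at hγne
      exact hγne hmerge
    have claim2 : g (qg i) ≤ f (pf i) := by
      by_contra hcon
      push_neg at hcon
      set t := max (max (g (qg (i-1))) (g (qg (i+1)))) (f (pf i)) with htdef
      have hti : t < g (qg i) := by
        apply max_lt (max_lt hwim hwip) hcon
      have hA1 : qg (i-1) ∈ sublevel g t :=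
        ⟨hG.pmem hi1m, le_trans (le_max_left _ _) (le_max_left _ _)⟩
      have hA2 : qg (i+1) ∈ sublevel g t :=
        ⟨hG.pmem hi1m', le_trans (le_max_right _ _) (le_max_left _ _)⟩
      set C1 : {C : Set ℝ // C ∈ Components (sublevel g t)} :=
        ⟨connectedComponentIn (sublevel g t) (qg (i-1)), MyAux.comp_mem_components hA1⟩
      set C2 : {C : Set ℝ // C ∈ Components (sublevel g t)} :=
        ⟨connectedComponentIn (sublevel g t) (qg (i+1)), MyAux.comp_mem_components hA2⟩
      have hC12 : C1 ≠ C2 := by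
        intro h
        have h1 : qg (i+1) ∈ C1.1 := by
          rw [h]; exact mem_connectedComponentIn hA2
        have h2 : qg i ∈ C1.1 := by
          apply MyAux.comp_ordConnected.out (mem_connectedComponentIn hA1) h1
          exact ⟨(hG.pltlt (i-1) i (by omega) (by omega)).le, (hG.plt i him).le⟩
        have := (MyAux.comp_subset' C1.2 h2).2
        linarith
      have hsub1' : ({qg (i-1)} : Set ℝ) ⊆ C1.1 := by
        rw [Set.singleton_subset_iff]; exact mem_connectedComponentIn hA1
      have hsub2' : ({qg (i+1)} : Set ℝ) ⊆ C2.1 := by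
        rw [Set.singleton_subset_iff]; exact mem_connectedComponentIn hA2
      have hl1 : g (qg (i-1)) ≤ t := le_trans (le_max_left _ _) (le_max_left _ _)
      have hl2 : g (qg (i+1)) ≤ t := le_trans (le_max_right _ _) (le_max_left _ _)
      have hq1 := hδincl (g (qg (i-1))) t hl1 ⟨{qg (i-1)}, hGmem (i-1) hi1m hi1e⟩ C1 hsub1'
      have hq2 := hδincl (g (qg (i+1))) t hl2 ⟨{qg (i+1)}, hGmem (i+1) hi1m' hi1e'⟩ C2 hsub2'
      rw [hKcomp (i-1) hi1m hi1e (hGmem (i-1) hi1m hi1e)] at hq1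
      rw [hKcomp (i+1) hi1m' hi1e' (hGmem (i+1) hi1m' hi1e')] at hq2
      rw [hKid (i-1) hi1m hi1e] at hq1
      rw [hKid (i+1) hi1m' hi1e'] at hq2
      have hm1 : pf (i-1) ∈ (δ t C1).1 := hq1 rfl
      have hm2 : pf (i+1) ∈ (δ t C2).1 := hq2 rfl
      have hδinj : Function.Injective (δ t) := by
        intro A B h
        have := congrArg (γ t) h
        rwa [hinv2, hinv2] at this
      have hδne : (δ t C1).1 ≠ (δ t C2).1 := by
        intro h
        exact hC12 (hδinj (Subtype.ext h))
      have hmerge := (hF.merge him hio (le_max_right _ _ : f (pf i) ≤ t)).2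
      have he1 : (δ t C1).1 = connectedComponentIn (sublevel f t) (pf (i-1)) :=
        MyAux.comp_eq_of_mem (δ t C1).2 hm1
      have he2 : (δ t C2).1 = connectedComponentIn (sublevel f t) (pf (i+1)) :=
        MyAux.comp_eq_of_mem (δ t C2).2 hm2
      rw [he1, he2] at hδne
      exact hδne hmerge
    exact le_antisymm claim1 claim2
  -- all critical values agree; glue
  apply MyAux.glue f g hF hG
  intro i hi
  by_cases hie : Even i
  · exact hveq i hi hie
  · apply hoddeq i ?_ hie
    rcases eq_or_lt_of_le hi with h | h
    · exfalso
      subst h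
      exact hie hF.meven
    · exact h
end
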